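/- arXiv:math/0509205 — 4 statements merged into one kernel-verified Lean document; each statement's English description precedes it below -/
import Mathlib

section
/- For every integer n ≥ 1, S_1(n) = (5/12)·σ_3(n) − (n/2)·σ_1(n) + (1/12)·σ_1(n). -/
/-- Divisor-power sum: `sigma' k x = ∑_{d ∣ x} d^k` for positive `x`, and `0` otherwise. -/
def sigma' (k x : ℕ) : ℕ := ∑ d ∈ x.divisors, d ^ k

/-- `Spair k n = ∑_{(a,b) ∈ ℤ_{>0}², k·a + b = n} σ₁(a)·σ₁(b)`. -/
def Spair (k n : ℕ) : ℕ :=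
  ∑ p ∈ ((Finset.Ioc 0 n) ×ˢ (Finset.Ioc 0 n)).filter (fun p => k * p.1 + p.2 = n),
    sigma' 1 p.1 * sigma' 1 p.2

open Finset

abbrev Quad := (ℕ × ℕ) × (ℕ × ℕ)

def TT (n : ℕ) : Finset Quad :=
  ((Finset.Ioc 0 n ×ˢ Finset.Ioc 0 n) ×ˢ (Finset.Ioc 0 n ×ˢ Finset.Ioc 0 n)).filter
    (fun q => q.1.1 * q.1.2 + q.2.1 * q.2.2 = n)

lemma mem_TT {n : ℕ} {q : Quad} :
    q ∈ TT n ↔ 0 < q.1.1 ∧ 0 < q.1.2 ∧ 0 < q.2.1 ∧ 0 < q.2.2 ∧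
      q.1.1 * q.1.2 + q.2.1 * q.2.2 = n := by
  obtain ⟨⟨a, x⟩, ⟨b, y⟩⟩ := q
  simp only [TT, Finset.mem_filter, Finset.mem_product, Finset.mem_Ioc]
  constructor
  · rintro ⟨⟨⟨⟨ha, _⟩, ⟨hx, _⟩⟩, ⟨⟨hb, _⟩, ⟨hy, _⟩⟩⟩, h⟩; exact ⟨ha, hx, hb, hy, h⟩
  · rintro ⟨ha, hx, hb, hy, h⟩
    have hax : a * x ≤ n := le_trans (Nat.le_add_right _ _) h.le
    have hby : b * y ≤ n := le_trans (Nat.le_add_left _ _) h.le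
    refine ⟨⟨⟨⟨ha, ?_⟩, ⟨hx, ?_⟩⟩, ⟨⟨hb, ?_⟩, ⟨hy, ?_⟩⟩⟩, h⟩
    · exact le_trans (Nat.le_mul_of_pos_right _ hx) hax
    · exact le_trans (Nat.le_mul_of_pos_left _ ha) hax
    · exact le_trans (Nat.le_mul_of_pos_right _ hy) hby
    · exact le_trans (Nat.le_mul_of_pos_left _ hb) hby

lemma sigma'_one (m : ℕ) : sigma' 1 m = ∑ e ∈ m.divisorsAntidiagonal, e.1 := by
  rw [show (∑ e ∈ m.divisorsAntidiagonal, e.1) =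
      ∑ e ∈ m.divisorsAntidiagonal, (fun i _ => i) e.1 e.2 from rfl,
    Nat.sum_divisorsAntidiagonal (fun i _ => i)]
  simp [sigma']

lemma spair_flat (n : ℕ) :
    Spair 1 n = ∑ q ∈ TT n, q.1.1 * q.2.1 := by
  have hP : Spair 1 n = ∑ p ∈ ((Finset.Ioc 0 n) ×ˢ (Finset.Ioc 0 n)).filter
      (fun p => 1 * p.1 + p.2 = n), sigma' 1 p.1 * sigma' 1 p.2 := rfl
  set P := ((Finset.Ioc 0 n) ×ˢ (Finset.Ioc 0 n)).filter (fun p => 1 * p.1 + p.2 = n) with hPdef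
  have hTT : TT n = P.biUnion
      (fun p => p.1.divisorsAntidiagonal ×ˢ p.2.divisorsAntidiagonal) := by
    ext q
    obtain ⟨⟨a, x⟩, ⟨b, y⟩⟩ := q
    simp only [mem_TT, Finset.mem_biUnion, hPdef, Finset.mem_filter, Finset.mem_product,
      Finset.mem_Ioc, Nat.mem_divisorsAntidiagonal]
    constructor
    · rintro ⟨ha, hx, hb, hy, h⟩
      refine ⟨(a * x, b * y), ⟨⟨⟨Nat.mul_pos ha hx, ?_⟩, ⟨Nat.mul_pos hb hy, ?_⟩⟩, by omega⟩,
        ⟨rfl, ?_⟩, ⟨rfl, ?_⟩⟩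
      · omega
      · omega
      · positivity
      · positivity
    · rintro ⟨⟨A, B⟩, ⟨⟨⟨hA, _⟩, ⟨hB, _⟩⟩, hsum⟩, ⟨hax, hA0⟩, ⟨hby, hB0⟩⟩
      simp only at hax hby hA0 hB0 hsum
      have h1 : a * x ≠ 0 := hax ▸ hA0
      have h2 : b * y ≠ 0 := hby ▸ hB0
      rw [Nat.mul_ne_zero_iff] at h1 h2
      refine ⟨Nat.pos_of_ne_zero h1.1, Nat.pos_of_ne_zero h1.2,
        Nat.pos_of_ne_zero h2.1, Nat.pos_of_ne_zero h2.2, by rw [hax, hby]; omega⟩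
  have hdisj : (P : Set (ℕ × ℕ)).PairwiseDisjoint
      (fun p => p.1.divisorsAntidiagonal ×ˢ p.2.divisorsAntidiagonal) := by
    intro p _ q _ hne
    simp only [Function.onFun, Finset.disjoint_left]
    rintro ⟨⟨a, x⟩, ⟨b, y⟩⟩ h1 h2
    simp only [Finset.mem_product, Nat.mem_divisorsAntidiagonal] at h1 h2
    exact hne (Prod.ext (h1.1.1.symm.trans h2.1.1) (h1.2.1.symm.trans h2.2.1))
  rw [hP, hTT, Finset.sum_biUnion hdisj]
  refine Finset.sum_congr rfl fun p _ => ?_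
  rw [sigma'_one, sigma'_one, Finset.sum_mul_sum, ← Finset.sum_product']

/-- swap symmetry -/
lemma TT_swap (n : ℕ) (F : Quad → ℚ) :
    ∑ q ∈ (TT n).filter (fun q => q.1.1 < q.2.1), F q
      = ∑ q ∈ (TT n).filter (fun q => q.2.1 < q.1.1), F q.swap := by
  refine Finset.sum_nbij' Prod.swap Prod.swap ?_ ?_ ?_ ?_ ?_
  · rintro ⟨⟨a, x⟩, ⟨b, y⟩⟩ hq
    simp only [Finset.mem_filter, mem_TT, Prod.swap] at hq ⊢
    obtain ⟨⟨ha, hx, hb, hy, he⟩, h⟩ := hq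
    exact ⟨⟨hb, hy, ha, hx, by rw [← he]; ring⟩, h⟩
  · rintro ⟨⟨a, x⟩, ⟨b, y⟩⟩ hq
    simp only [Finset.mem_filter, mem_TT, Prod.swap] at hq ⊢
    obtain ⟨⟨ha, hx, hb, hy, he⟩, h⟩ := hq
    exact ⟨⟨hb, hy, ha, hx, by rw [← he]; ring⟩, h⟩
  · rintro ⟨⟨a, x⟩, ⟨b, y⟩⟩ _; rfl
  · rintro ⟨⟨a, x⟩, ⟨b, y⟩⟩ _; rfl
  · rintro ⟨⟨a, x⟩, ⟨b, y⟩⟩ _; rfl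

/-- Liouville map θ₁ : region x < y  →  region b < a -/
lemma TT_theta1 (n : ℕ) (f : ℕ → ℕ → ℚ) :
    ∑ q ∈ (TT n).filter (fun q => q.1.2 < q.2.2), f (q.1.1 + q.2.1) q.2.1
      = ∑ q ∈ (TT n).filter (fun q => q.2.1 < q.1.1), f q.1.1 q.2.1 := by
  refine Finset.sum_nbij'
    (fun q => ((q.1.1 + q.2.1, q.1.2), (q.2.1, q.2.2 - q.1.2)))
    (fun q => ((q.1.1 - q.2.1, q.1.2), (q.2.1, q.1.2 + q.2.2))) ?_ ?_ ?_ ?_ ?_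
  · rintro ⟨⟨a, x⟩, ⟨b, y⟩⟩ hq
    simp only [Finset.mem_filter, mem_TT] at hq ⊢
    obtain ⟨⟨ha, hx, hb, hy, he⟩, hxy⟩ := hq
    obtain ⟨t, rfl⟩ := Nat.exists_eq_add_of_lt hxy
    refine ⟨⟨by omega, hx, hb, by omega, ?_⟩, by omega⟩
    have h1 : x + t + 1 - x = t + 1 := by omega
    rw [h1, ← he]; ring
  · rintro ⟨⟨a, x⟩, ⟨b, y⟩⟩ hq
    simp only [Finset.mem_filter, mem_TT] at hq ⊢
    obtain ⟨⟨ha, hx, hb, hy, he⟩, hba⟩ := hq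
    obtain ⟨t, rfl⟩ := Nat.exists_eq_add_of_lt hba
    refine ⟨⟨by omega, hx, hb, by omega, ?_⟩, by omega⟩
    have h1 : b + t + 1 - b = t + 1 := by omega
    rw [h1, ← he]; ring
  · rintro ⟨⟨a, x⟩, ⟨b, y⟩⟩ hq
    simp only [Finset.mem_filter, mem_TT] at hq
    simp only [Prod.mk.injEq, and_true, true_and, eq_self_iff_true]
    omega
  · rintro ⟨⟨a, x⟩, ⟨b, y⟩⟩ hq
    simp only [Finset.mem_filter, mem_TT] at hq
    simp only [Prod.mk.injEq, and_true, true_and, eq_self_iff_true]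
    omega
  · rintro ⟨⟨a, x⟩, ⟨b, y⟩⟩ _; rfl

/-- Liouville map θ₂ : region y < x  →  region b < a -/
lemma TT_theta2 (n : ℕ) (f : ℕ → ℕ → ℚ) :
    ∑ q ∈ (TT n).filter (fun q => q.2.2 < q.1.2), f (q.1.1 + q.2.1) q.1.1
      = ∑ q ∈ (TT n).filter (fun q => q.2.1 < q.1.1), f q.1.1 q.2.1 := by
  refine Finset.sum_nbij'
    (fun q => ((q.1.1 + q.2.1, q.2.2), (q.1.1, q.1.2 - q.2.2)))
    (fun q => ((q.2.1, q.1.2 + q.2.2), (q.1.1 - q.2.1, q.1.2))) ?_ ?_ ?_ ?_ ?_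
  · rintro ⟨⟨a, x⟩, ⟨b, y⟩⟩ hq
    simp only [Finset.mem_filter, mem_TT] at hq ⊢
    obtain ⟨⟨ha, hx, hb, hy, he⟩, hyx⟩ := hq
    obtain ⟨t, rfl⟩ := Nat.exists_eq_add_of_lt hyx
    refine ⟨⟨by omega, hy, ha, by omega, ?_⟩, by omega⟩
    have h1 : y + t + 1 - y = t + 1 := by omega
    rw [h1, ← he]; ring
  · rintro ⟨⟨a, x⟩, ⟨b, y⟩⟩ hq
    simp only [Finset.mem_filter, mem_TT] at hq ⊢
    obtain ⟨⟨ha, hx, hb, hy, he⟩, hba⟩ := hq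
    obtain ⟨t, rfl⟩ := Nat.exists_eq_add_of_lt hba
    refine ⟨⟨hb, by omega, by omega, hx, ?_⟩, by omega⟩
    have h1 : b + t + 1 - b = t + 1 := by omega
    rw [h1, ← he]; ring
  · rintro ⟨⟨a, x⟩, ⟨b, y⟩⟩ hq
    simp only [Finset.mem_filter, mem_TT] at hq
    simp only [Prod.mk.injEq, and_true, true_and, eq_self_iff_true]
    omega
  · rintro ⟨⟨a, x⟩, ⟨b, y⟩⟩ hq
    simp only [Finset.mem_filter, mem_TT] at hq
    simp only [Prod.mk.injEq, and_true, true_and, eq_self_iff_true]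
    omega
  · rintro ⟨⟨a, x⟩, ⟨b, y⟩⟩ _; rfl

lemma TT_diag_xy (n : ℕ) (f : ℕ → ℕ → ℚ) :
    ∑ q ∈ (TT n).filter (fun q => q.1.2 = q.2.2), f q.1.1 q.2.1
      = ∑ s ∈ n.divisors, ∑ a ∈ Finset.Ioo 0 s, f a (s - a) := by
  rw [Finset.sum_sigma' n.divisors (fun s => Finset.Ioo 0 s) (fun s a => f a (s - a))]
  refine Finset.sum_nbij' (fun q => ⟨q.1.1 + q.2.1, q.1.1⟩)
    (fun p => ((p.2, n / p.1), (p.1 - p.2, n / p.1))) ?_ ?_ ?_ ?_ ?_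
  · rintro ⟨⟨a, x⟩, ⟨b, y⟩⟩ hq
    simp only [Finset.mem_filter, mem_TT] at hq
    obtain ⟨⟨ha, hx, hb, hy, he⟩, hxy⟩ := hq
    subst hxy
    simp only [Finset.mem_sigma, Nat.mem_divisors, Finset.mem_Ioo]
    have hp1 : 0 < a * x := Nat.mul_pos ha hx
    refine ⟨⟨⟨x, by rw [← he]; ring⟩, by omega⟩, ha, by omega⟩
  · rintro ⟨s, a⟩ hp
    simp only [Finset.mem_sigma, Nat.mem_divisors, Finset.mem_Ioo] at hp
    obtain ⟨⟨hdvd, hn0⟩, ha0, has⟩ := hp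
    have hm : s * (n / s) = n := Nat.mul_div_cancel' hdvd
    have hs0 : 0 < s := by omega
    have hm0 : 0 < n / s := by
      rcases Nat.eq_zero_or_pos (n / s) with h | h
      · rw [h, Nat.mul_zero] at hm; omega
      · exact h
    simp only [Finset.mem_filter, mem_TT]
    refine ⟨⟨ha0, hm0, by omega, hm0, ?_⟩, trivial⟩
    have h2 : a + (s - a) = s := by omega
    rw [← Nat.add_mul, h2, hm]
  · rintro ⟨⟨a, x⟩, ⟨b, y⟩⟩ hq
    simp only [Finset.mem_filter, mem_TT] at hq
    obtain ⟨⟨ha, hx, hb, hy, he⟩, hxy⟩ := hq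
    subst hxy
    have he' : (a + b) * x = n := by rw [← he]; ring
    have hx' : n / (a + b) = x := by
      rw [← he', Nat.mul_div_cancel_left _ (by omega : 0 < a + b)]
    have hab : a + b - a = b := by omega
    show ((a, n / (a + b)), (a + b - a, n / (a + b))) = ((a, x), (b, x))
    rw [hx', hab]
  · rintro ⟨s, a⟩ hp
    simp only [Finset.mem_sigma, Nat.mem_divisors, Finset.mem_Ioo] at hp
    obtain ⟨⟨hdvd, hn0⟩, ha0, has⟩ := hp
    have h2 : a + (s - a) = s := by omega
    show (⟨a + (s - a), a⟩ : (_ : ℕ) × ℕ) = ⟨s, a⟩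
    rw [h2]
  · rintro ⟨⟨a, x⟩, ⟨b, y⟩⟩ hq
    simp only [Finset.mem_filter, mem_TT] at hq
    have : a + b - a = b := by omega
    simp only [this]

lemma TT_diag_ab (n : ℕ) (f : ℕ → ℚ) :
    ∑ q ∈ (TT n).filter (fun q => q.1.1 = q.2.1), f q.1.1
      = ∑ s ∈ n.divisors, ∑ x ∈ Finset.Ioo 0 (n / s), f s := by
  rw [Finset.sum_sigma' n.divisors (fun s => Finset.Ioo 0 (n / s)) (fun s _ => f s)]
  refine Finset.sum_nbij' (fun q => ⟨q.1.1, q.1.2⟩)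
    (fun p => ((p.1, p.2), (p.1, n / p.1 - p.2))) ?_ ?_ ?_ ?_ ?_
  · rintro ⟨⟨a, x⟩, ⟨b, y⟩⟩ hq
    simp only [Finset.mem_filter, mem_TT] at hq
    obtain ⟨⟨ha, hx, hb, hy, he⟩, hab⟩ := hq
    subst hab
    have he' : a * (x + y) = n := by rw [← he]; ring
    have hxy : n / a = x + y := by
      rw [← he', Nat.mul_div_cancel_left _ ha]
    simp only [Finset.mem_sigma, Nat.mem_divisors, Finset.mem_Ioo]
    have hp1 : 0 < a * (x + y) := Nat.mul_pos ha (by omega)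
    exact ⟨⟨⟨x + y, he'.symm⟩, by omega⟩, hx, by omega⟩
  · rintro ⟨s, x⟩ hp
    simp only [Finset.mem_sigma, Nat.mem_divisors, Finset.mem_Ioo] at hp
    obtain ⟨⟨hdvd, hn0⟩, hx0, hxm⟩ := hp
    have hm : s * (n / s) = n := Nat.mul_div_cancel' hdvd
    have hs0 : 0 < s := by
      rcases Nat.eq_zero_or_pos s with h | h
      · subst h; simp at hm; omega
      · exact h
    simp only [Finset.mem_filter, mem_TT]
    refine ⟨⟨hs0, hx0, hs0, by omega, ?_⟩, trivial⟩
    have h2 : x + (n / s - x) = n / s := by omega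
    rw [← Nat.mul_add, h2, hm]
  · rintro ⟨⟨a, x⟩, ⟨b, y⟩⟩ hq
    simp only [Finset.mem_filter, mem_TT] at hq
    obtain ⟨⟨ha, hx, hb, hy, he⟩, hab⟩ := hq
    subst hab
    have he' : a * (x + y) = n := by rw [← he]; ring
    have hxy : n / a = x + y := by
      rw [← he', Nat.mul_div_cancel_left _ ha]
    simp only [Prod.mk.injEq, true_and, and_true]
    omega
  · rintro ⟨s, x⟩ _
    rfl
  · rintro ⟨⟨a, x⟩, ⟨b, y⟩⟩ _
    rfl

lemma gauss1 (s : ℕ) : ∑ a ∈ Finset.range s, (a : ℚ) = s * (s - 1) / 2 := by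
  induction s with
  | zero => simp
  | succ m ih => rw [Finset.sum_range_succ, ih]; push_cast; ring

lemma gauss2 (s : ℕ) : ∑ a ∈ Finset.range s, (a : ℚ) ^ 2
    = s * (s - 1) * (2 * s - 1) / 6 := by
  induction s with
  | zero => simp
  | succ m ih => rw [Finset.sum_range_succ, ih]; push_cast; ring

lemma range_eq_ioo (g : ℕ → ℚ) {s : ℕ} (hs : 0 < s) :
    ∑ a ∈ Finset.range s, g a = g 0 + ∑ a ∈ Finset.Ioo 0 s, g a := by
  rw [Finset.range_eq_Ico, ← Finset.Ioo_insert_left hs, Finset.sum_insert (by simp)]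

lemma innerD1 {s : ℕ} (hs : 0 < s) :
    ∑ a ∈ Finset.Ioo 0 s, (a : ℚ) * ((s - a : ℕ) : ℚ) = ((s : ℚ) ^ 3 - s) / 6 := by
  have h0 : ∑ a ∈ Finset.range s, (a : ℚ) * ((s - a : ℕ) : ℚ)
      = (0 : ℚ) * ((s - 0 : ℕ) : ℚ) + ∑ a ∈ Finset.Ioo 0 s, (a : ℚ) * ((s - a : ℕ) : ℚ) :=
    range_eq_ioo (fun a => (a : ℚ) * ((s - a : ℕ) : ℚ)) hs
  have h1 : ∑ a ∈ Finset.range s, (a : ℚ) * ((s - a : ℕ) : ℚ)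
      = ∑ a ∈ Finset.range s, ((s : ℚ) * a - (a : ℚ) ^ 2) := by
    refine Finset.sum_congr rfl fun a ha => ?_
    rw [Finset.mem_range] at ha
    rw [Nat.cast_sub ha.le]; ring
  rw [h1, Finset.sum_sub_distrib, ← Finset.mul_sum, gauss1, gauss2] at h0
  simp only [zero_mul, zero_add] at h0
  rw [← h0]; ring

lemma innerD2 {s : ℕ} (hs : 0 < s) :
    ∑ a ∈ Finset.Ioo 0 s, ((a : ℚ) - ((s - a : ℕ) : ℚ)) ^ 2
      = ((s : ℚ) ^ 3 - 3 * (s : ℚ) ^ 2 + 2 * s) / 3 := by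
  have h0 : ∑ a ∈ Finset.range s, ((a : ℚ) - ((s - a : ℕ) : ℚ)) ^ 2
      = ((0 : ℚ) - ((s - 0 : ℕ) : ℚ)) ^ 2
        + ∑ a ∈ Finset.Ioo 0 s, ((a : ℚ) - ((s - a : ℕ) : ℚ)) ^ 2 :=
    range_eq_ioo (fun a => ((a : ℚ) - ((s - a : ℕ) : ℚ)) ^ 2) hs
  have h1 : ∑ a ∈ Finset.range s, ((a : ℚ) - ((s - a : ℕ) : ℚ)) ^ 2
      = ∑ a ∈ Finset.range s, (4 * (a : ℚ) ^ 2 - 4 * (s : ℚ) * a + (s : ℚ) ^ 2) := by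
    refine Finset.sum_congr rfl fun a ha => ?_
    rw [Finset.mem_range] at ha
    rw [Nat.cast_sub ha.le]; ring
  have h2 : ∑ a ∈ Finset.range s, (4 * (a : ℚ) ^ 2 - 4 * (s : ℚ) * a + (s : ℚ) ^ 2)
      = 4 * (s * (s - 1) * (2 * s - 1) / 6) - 4 * s * (s * (s - 1) / 2) + s * (s : ℚ) ^ 2 := by
    rw [Finset.sum_add_distrib, Finset.sum_sub_distrib, ← Finset.mul_sum, ← Finset.mul_sum,
      gauss1, gauss2, Finset.sum_const, Finset.card_range, nsmul_eq_mul]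
  rw [h1, h2] at h0
  have h3 : ((s - 0 : ℕ) : ℚ) = (s : ℚ) := by norm_num
  rw [h3] at h0
  have h4 : ∑ a ∈ Finset.Ioo 0 s, ((a : ℚ) - ((s - a : ℕ) : ℚ)) ^ 2
      = 4 * ((s : ℚ) * (s - 1) * (2 * s - 1) / 6) - 4 * s * (s * (s - 1) / 2) + s * (s : ℚ) ^ 2
        - ((0 : ℚ) - (s : ℚ)) ^ 2 := by linarith [h0]
  rw [h4]; ring

lemma cast_sigma' (k n : ℕ) : (sigma' k n : ℚ) = ∑ s ∈ n.divisors, (s : ℚ) ^ k := by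
  rw [sigma']; push_cast; rfl

lemma cast_sigma1 (n : ℕ) : (sigma' 1 n : ℚ) = ∑ s ∈ n.divisors, (s : ℚ) := by
  rw [cast_sigma']; exact Finset.sum_congr rfl fun s _ => pow_one _

lemma D1 (n : ℕ) :
    ∑ s ∈ n.divisors, ∑ a ∈ Finset.Ioo 0 s, (a : ℚ) * ((s - a : ℕ) : ℚ)
      = ((sigma' 3 n : ℚ) - (sigma' 1 n : ℚ)) / 6 := by
  have h1 : ∀ s ∈ n.divisors, ∑ a ∈ Finset.Ioo 0 s, (a : ℚ) * ((s - a : ℕ) : ℚ)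
      = ((s : ℚ) ^ 3 - s) / 6 := fun s hs => innerD1 (Nat.pos_of_mem_divisors hs)
  rw [Finset.sum_congr rfl h1, cast_sigma' 3, cast_sigma1,
    ← Finset.sum_div, Finset.sum_sub_distrib]

lemma D2 (n : ℕ) :
    ∑ s ∈ n.divisors, ∑ a ∈ Finset.Ioo 0 s, ((a : ℚ) - ((s - a : ℕ) : ℚ)) ^ 2
      = ((sigma' 3 n : ℚ) - 3 * (sigma' 2 n : ℚ) + 2 * (sigma' 1 n : ℚ)) / 3 := by
  have h1 : ∀ s ∈ n.divisors, ∑ a ∈ Finset.Ioo 0 s, ((a : ℚ) - ((s - a : ℕ) : ℚ)) ^ 2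
      = ((s : ℚ) ^ 3 - 3 * (s : ℚ) ^ 2 + 2 * s) / 3 :=
    fun s hs => innerD2 (Nat.pos_of_mem_divisors hs)
  rw [Finset.sum_congr rfl h1, cast_sigma' 3, cast_sigma' 2, cast_sigma1,
    ← Finset.sum_div, Finset.sum_add_distrib, Finset.sum_sub_distrib, ← Finset.mul_sum,
    ← Finset.mul_sum]

lemma D3 (n : ℕ) :
    ∑ s ∈ n.divisors, ∑ x ∈ Finset.Ioo 0 (n / s), (s : ℚ) ^ 2
      = (n : ℚ) * (sigma' 1 n : ℚ) - (sigma' 2 n : ℚ) := by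
  have h1 : ∀ s ∈ n.divisors, ∑ x ∈ Finset.Ioo 0 (n / s), (s : ℚ) ^ 2
      = (n : ℚ) * s - (s : ℚ) ^ 2 := by
    intro s hs
    obtain ⟨hdvd, hn0⟩ := Nat.mem_divisors.mp hs
    have hs0 : 0 < s := Nat.pos_of_mem_divisors hs
    have hm0 : 0 < n / s := Nat.div_pos (Nat.le_of_dvd (Nat.pos_of_ne_zero hn0) hdvd) hs0
    rw [Finset.sum_const, Nat.card_Ioo, nsmul_eq_mul]
    have hc : ((n / s : ℕ) : ℚ) * s = n := by
      exact_mod_cast congrArg (fun t : ℕ => (t : ℚ)) (Nat.div_mul_cancel hdvd)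
    have hc2 : ((n / s - 1 : ℕ) : ℚ) = ((n / s : ℕ) : ℚ) - 1 := by
      have : (1 : ℕ) ≤ n / s := hm0
      push_cast [this]; ring
    rw [show n / s - 0 - 1 = n / s - 1 from by omega, hc2]
    nlinarith [hc]
  rw [Finset.sum_congr rfl h1, cast_sigma' 2, cast_sigma1,
    Finset.sum_sub_distrib, ← Finset.mul_sum]

lemma tri_split (s : Finset Quad) (g h : Quad → ℕ) (F : Quad → ℚ) :
    ∑ q ∈ s, F q = (∑ q ∈ s.filter (fun q => g q < h q), F q)
      + (∑ q ∈ s.filter (fun q => h q < g q), F q)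
      + (∑ q ∈ s.filter (fun q => g q = h q), F q) := by
  classical
  rw [← Finset.sum_filter_add_sum_filter_not s (fun q => g q < h q) F]
  have h2 := Finset.sum_filter_add_sum_filter_not
    (s.filter (fun q => ¬ g q < h q)) (fun q => h q < g q) F
  rw [Finset.filter_filter, Finset.filter_filter] at h2
  have e1 : s.filter (fun q => ¬ g q < h q ∧ h q < g q)
      = s.filter (fun q => h q < g q) := by
    ext q; simp only [Finset.mem_filter]
    constructor
    · rintro ⟨hm, _, hh⟩; exact ⟨hm, hh⟩
    · rintro ⟨hm, hh⟩; exact ⟨hm, by omega, hh⟩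
  have e2 : s.filter (fun q => ¬ g q < h q ∧ ¬ h q < g q)
      = s.filter (fun q => g q = h q) := by
    ext q; simp only [Finset.mem_filter]
    constructor
    · rintro ⟨hm, h1, hh⟩; exact ⟨hm, by omega⟩
    · rintro ⟨hm, hh⟩; exact ⟨hm, by omega, by omega⟩
  rw [e1, e2] at h2
  linarith [h2]

theorem stmt0 (n : ℕ) (hn : 1 ≤ n) :
    (Spair 1 n : ℚ) =
      (5 / 12) * (sigma' 3 n : ℚ) - ((n : ℚ) / 2) * (sigma' 1 n : ℚ)
        + (1 / 12) * (sigma' 1 n : ℚ) := by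
  classical
  have hcast : (Spair 1 n : ℚ) = ∑ q ∈ TT n, (q.1.1 : ℚ) * q.2.1 := by
    rw [spair_flat]; push_cast; rfl
  -- region sums over b < a
  -- Equation I pieces
  have hxy1 : ∑ q ∈ (TT n).filter (fun q => q.1.2 < q.2.2), (q.1.1 : ℚ) * q.2.1
      = ∑ q ∈ (TT n).filter (fun q => q.2.1 < q.1.1),
          (((q.1.1 : ℚ) - q.2.1) * q.2.1) := by
    have ht := TT_theta1 n (fun c d => ((c : ℚ) - d) * d)
    have hl : ∑ q ∈ (TT n).filter (fun q => q.1.2 < q.2.2), (q.1.1 : ℚ) * q.2.1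
        = ∑ q ∈ (TT n).filter (fun q => q.1.2 < q.2.2),
            ((((q.1.1 + q.2.1 : ℕ)) : ℚ) - (q.2.1 : ℚ)) * (q.2.1 : ℚ) := by
      refine Finset.sum_congr rfl fun q _ => ?_; push_cast; ring
    rw [hl]; exact ht
  have hxy2 : ∑ q ∈ (TT n).filter (fun q => q.2.2 < q.1.2), (q.1.1 : ℚ) * q.2.1
      = ∑ q ∈ (TT n).filter (fun q => q.2.1 < q.1.1),
          (((q.1.1 : ℚ) - q.2.1) * q.2.1) := by
    have ht := TT_theta2 n (fun c d => ((c : ℚ) - d) * d)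
    have hl : ∑ q ∈ (TT n).filter (fun q => q.2.2 < q.1.2), (q.1.1 : ℚ) * q.2.1
        = ∑ q ∈ (TT n).filter (fun q => q.2.2 < q.1.2),
            ((((q.1.1 + q.2.1 : ℕ)) : ℚ) - (q.1.1 : ℚ)) * (q.1.1 : ℚ) := by
      refine Finset.sum_congr rfl fun q _ => ?_; push_cast; ring
    rw [hl]; exact ht
  have hxy3 : ∑ q ∈ (TT n).filter (fun q => q.1.2 = q.2.2), (q.1.1 : ℚ) * q.2.1
      = ((sigma' 3 n : ℚ) - (sigma' 1 n : ℚ)) / 6 := by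
    rw [TT_diag_xy n (fun a b => (a : ℚ) * b)]; exact D1 n
  have hsub1 : ∑ q ∈ (TT n).filter (fun q => q.2.1 < q.1.1),
      (((q.1.1 : ℚ) - q.2.1) * q.2.1)
      = (∑ q ∈ (TT n).filter (fun q => q.2.1 < q.1.1), (q.1.1 : ℚ) * q.2.1)
        - ∑ q ∈ (TT n).filter (fun q => q.2.1 < q.1.1), (q.2.1 : ℚ) ^ 2 := by
    rw [← Finset.sum_sub_distrib]
    refine Finset.sum_congr rfl fun q _ => ?_; ring
  have EqI := tri_split (TT n) (fun q => q.1.2) (fun q => q.2.2)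
    (fun q => (q.1.1 : ℚ) * q.2.1)
  beta_reduce at EqI
  rw [hxy1, hxy2, hxy3, hsub1] at EqI
  -- Equation II
  have hsq_ab : ∑ q ∈ TT n, ((q.1.1 : ℚ) - q.2.1) ^ 2
      = 2 * ∑ q ∈ (TT n).filter (fun q => q.2.1 < q.1.1),
          ((q.1.1 : ℚ) - q.2.1) ^ 2 := by
    have htr := tri_split (TT n) (fun q => q.1.1) (fun q => q.2.1)
      (fun q => ((q.1.1 : ℚ) - q.2.1) ^ 2)
    beta_reduce at htr
    have hsw := TT_swap n (fun q => ((q.1.1 : ℚ) - q.2.1) ^ 2)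
    have hsw' : ∑ q ∈ (TT n).filter (fun q => q.2.1 < q.1.1),
        (((q.swap.1.1 : ℕ) : ℚ) - (q.swap.2.1 : ℕ)) ^ 2
        = ∑ q ∈ (TT n).filter (fun q => q.2.1 < q.1.1), ((q.1.1 : ℚ) - q.2.1) ^ 2 := by
      refine Finset.sum_congr rfl fun q _ => ?_
      obtain ⟨⟨a, x⟩, ⟨b, y⟩⟩ := q
      simp only [Prod.swap]; ring
    have hz : ∑ q ∈ (TT n).filter (fun q => q.1.1 = q.2.1),
        ((q.1.1 : ℚ) - q.2.1) ^ 2 = 0 := by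
      refine Finset.sum_eq_zero fun q hq => ?_
      obtain ⟨_, he⟩ := Finset.mem_filter.mp hq
      rw [he]; ring
    rw [hsw, hsw', hz] at htr
    rw [htr]; ring
  have hsq_xy : ∑ q ∈ TT n, ((q.1.1 : ℚ) - q.2.1) ^ 2
      = 2 * (∑ q ∈ (TT n).filter (fun q => q.2.1 < q.1.1),
          ((q.1.1 : ℚ) - 2 * q.2.1) ^ 2)
        + ((sigma' 3 n : ℚ) - 3 * (sigma' 2 n : ℚ) + 2 * (sigma' 1 n : ℚ)) / 3 := by
    have htr := tri_split (TT n) (fun q => q.1.2) (fun q => q.2.2)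
      (fun q => ((q.1.1 : ℚ) - q.2.1) ^ 2)
    beta_reduce at htr
    have ht1 := TT_theta1 n (fun c d => ((c : ℚ) - 2 * d) ^ 2)
    have hl1 : ∑ q ∈ (TT n).filter (fun q => q.1.2 < q.2.2), ((q.1.1 : ℚ) - q.2.1) ^ 2
        = ∑ q ∈ (TT n).filter (fun q => q.1.2 < q.2.2),
            ((((q.1.1 + q.2.1 : ℕ)) : ℚ) - 2 * (q.2.1 : ℚ)) ^ 2 := by
      refine Finset.sum_congr rfl fun q _ => ?_; push_cast; ring
    have ht2 := TT_theta2 n (fun c d => ((c : ℚ) - 2 * d) ^ 2)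
    have hl2 : ∑ q ∈ (TT n).filter (fun q => q.2.2 < q.1.2), ((q.1.1 : ℚ) - q.2.1) ^ 2
        = ∑ q ∈ (TT n).filter (fun q => q.2.2 < q.1.2),
            ((((q.1.1 + q.2.1 : ℕ)) : ℚ) - 2 * (q.1.1 : ℚ)) ^ 2 := by
      refine Finset.sum_congr rfl fun q _ => ?_; push_cast; ring
    have hd := TT_diag_xy n (fun a b => ((a : ℚ) - b) ^ 2)
    rw [hl1, ht1, hl2, ht2, hd, D2 n] at htr
    rw [htr]; ring
  have hsub2 : ∑ q ∈ (TT n).filter (fun q => q.2.1 < q.1.1), ((q.1.1 : ℚ) - q.2.1) ^ 2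
      - ∑ q ∈ (TT n).filter (fun q => q.2.1 < q.1.1), ((q.1.1 : ℚ) - 2 * q.2.1) ^ 2
      = 2 * (∑ q ∈ (TT n).filter (fun q => q.2.1 < q.1.1), (q.1.1 : ℚ) * q.2.1)
        - 3 * ∑ q ∈ (TT n).filter (fun q => q.2.1 < q.1.1), (q.2.1 : ℚ) ^ 2 := by
    rw [← Finset.sum_sub_distrib, Finset.mul_sum, Finset.mul_sum, ← Finset.sum_sub_distrib]
    refine Finset.sum_congr rfl fun q _ => ?_; ring
  -- Equation III
  have hab1 : ∑ q ∈ (TT n).filter (fun q => q.1.1 < q.2.1), (q.1.1 : ℚ) * q.2.1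
      = ∑ q ∈ (TT n).filter (fun q => q.2.1 < q.1.1), (q.1.1 : ℚ) * q.2.1 := by
    rw [TT_swap n (fun q => (q.1.1 : ℚ) * q.2.1)]
    refine Finset.sum_congr rfl fun q _ => ?_
    obtain ⟨⟨a, x⟩, ⟨b, y⟩⟩ := q
    simp only [Prod.swap]; ring
  have hab2 : ∑ q ∈ (TT n).filter (fun q => q.1.1 = q.2.1), (q.1.1 : ℚ) * q.2.1
      = (n : ℚ) * (sigma' 1 n : ℚ) - (sigma' 2 n : ℚ) := by
    have hc : ∑ q ∈ (TT n).filter (fun q => q.1.1 = q.2.1), (q.1.1 : ℚ) * q.2.1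
        = ∑ q ∈ (TT n).filter (fun q => q.1.1 = q.2.1), ((q.1.1 : ℕ) : ℚ) ^ 2 := by
      refine Finset.sum_congr rfl fun q hq => ?_
      obtain ⟨_, he⟩ := Finset.mem_filter.mp hq
      rw [← he]; ring
    rw [hc, TT_diag_ab n (fun s => (s : ℚ) ^ 2)]
    exact D3 n
  have EqIII := tri_split (TT n) (fun q => q.1.1) (fun q => q.2.1)
    (fun q => (q.1.1 : ℚ) * q.2.1)
  beta_reduce at EqIII
  rw [hab1, hab2] at EqIII
  rw [hcast]
  linarith [EqI, EqIII, hsq_ab, hsq_xy, hsub2]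
end

section
/- Let n ≥ 1 be an odd integer. For each positive divisor r of n let α_1(n,r) = Σ u_1·u_2, the sum ranging over quadruples (h_1, u_1, h_2, u_2) of positive integers with gcd(h_1, h_2) = 1, h_1 and h_2 both odd, u_1 < u_2 and h_1·u_1 + h_2·u_2 = n/r. Then Σ_{r ∣ n} r·μ(r)·α_1(n,r) = (n²(n − 1)/8)·Σ_{r ∣ n} μ(r)/r². -/
/-- Quadruples `(h₁, u₁, h₂, u₂)` of positive integers bounded by `m`. -/
def quadBox (m : ℕ) : Finset (ℕ × ℕ × ℕ × ℕ) :=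
  Finset.Ioc 0 m ×ˢ Finset.Ioc 0 m ×ˢ Finset.Ioc 0 m ×ˢ Finset.Ioc 0 m

/-- `alpha1 m = ∑ u₁·u₂` over quadruples `(h₁,u₁,h₂,u₂)` of positive integers with
`gcd(h₁,h₂) = 1`, `h₁` and `h₂` odd, `u₁ < u₂` and `h₁·u₁ + h₂·u₂ = m`. -/
def alpha1 (m : ℕ) : ℕ :=
  ∑ p ∈ (quadBox m).filter
      (fun p => Nat.gcd p.1 p.2.2.1 = 1 ∧ Odd p.1 ∧ Odd p.2.2.1 ∧
        p.2.1 < p.2.2.2 ∧ p.1 * p.2.1 + p.2.2.1 * p.2.2.2 = m),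
    p.2.1 * p.2.2.2

namespace Stmt9Aux

open Finset

lemma mem_quadBox {m : ℕ} {p : ℕ × ℕ × ℕ × ℕ} :
    p ∈ quadBox m ↔ (0 < p.1 ∧ p.1 ≤ m) ∧ (0 < p.2.1 ∧ p.2.1 ≤ m) ∧
      (0 < p.2.2.1 ∧ p.2.2.1 ≤ m) ∧ (0 < p.2.2.2 ∧ p.2.2.2 ≤ m) := by
  simp [quadBox, Finset.mem_product, Finset.mem_Ioc, and_assoc]
lemma box_of {m a x b y : ℕ} (ha : 0 < a) (hx : 0 < x) (hb : 0 < b) (hy : 0 < y)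
    (h : a * x + b * y = m) : ((a, x, b, y) : ℕ × ℕ × ℕ × ℕ) ∈ quadBox m := by
  have hax : a * x ≤ m := by have : 0 < b * y := Nat.mul_pos hb hy; omega
  have hby : b * y ≤ m := by have : 0 < a * x := Nat.mul_pos ha hx; omega
  refine mem_quadBox.mpr ⟨⟨ha, ?_⟩, ⟨hx, ?_⟩, ⟨hb, ?_⟩, ⟨hy, ?_⟩⟩
  · exact le_trans (Nat.le_mul_of_pos_right a hx) hax
  · exact le_trans (Nat.le_mul_of_pos_left x ha) hax
  · exact le_trans (Nat.le_mul_of_pos_right b hy) hby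
  · exact le_trans (Nat.le_mul_of_pos_left y hb) hby
def Qf (m : ℕ) : Finset (ℕ × ℕ × ℕ × ℕ) :=
  (quadBox m).filter (fun p => Odd p.1 ∧ Odd p.2.2.1 ∧ p.1 * p.2.1 + p.2.2.1 * p.2.2.2 = m)
def Uf (m : ℕ) : Finset (ℕ × ℕ × ℕ × ℕ) :=
  (quadBox m).filter (fun p => Even p.1 ∧ Odd p.2.2.1 ∧ p.1 * p.2.1 + p.2.2.1 * p.2.2.2 = m)
lemma mem_Qf {m : ℕ} {p : ℕ × ℕ × ℕ × ℕ} :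
    p ∈ Qf m ↔ ((0 < p.1 ∧ p.1 ≤ m) ∧ (0 < p.2.1 ∧ p.2.1 ≤ m) ∧
      (0 < p.2.2.1 ∧ p.2.2.1 ≤ m) ∧ (0 < p.2.2.2 ∧ p.2.2.2 ≤ m)) ∧
      Odd p.1 ∧ Odd p.2.2.1 ∧ p.1 * p.2.1 + p.2.2.1 * p.2.2.2 = m := by
  simp [Qf, Finset.mem_filter, mem_quadBox]
lemma mem_Uf {m : ℕ} {p : ℕ × ℕ × ℕ × ℕ} :
    p ∈ Uf m ↔ ((0 < p.1 ∧ p.1 ≤ m) ∧ (0 < p.2.1 ∧ p.2.1 ≤ m) ∧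
      (0 < p.2.2.1 ∧ p.2.2.1 ≤ m) ∧ (0 < p.2.2.2 ∧ p.2.2.2 ≤ m)) ∧
      Even p.1 ∧ Odd p.2.2.1 ∧ p.1 * p.2.1 + p.2.2.1 * p.2.2.2 = m := by
  simp [Uf, Finset.mem_filter, mem_quadBox]
lemma Qf_swap (m : ℕ) (P : ℕ × ℕ × ℕ × ℕ → Prop) [DecidablePred P] (w : ℕ × ℕ × ℕ × ℕ → ℚ) :
    ∑ p ∈ (Qf m).filter P, w p
      = ∑ p ∈ (Qf m).filter (fun p => P (p.2.2.1, p.2.2.2, p.1, p.2.1)),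
          w (p.2.2.1, p.2.2.2, p.1, p.2.1) := by
  refine Finset.sum_nbij' (fun p => (p.2.2.1, p.2.2.2, p.1, p.2.1))
    (fun p => (p.2.2.1, p.2.2.2, p.1, p.2.1)) ?_ ?_ ?_ ?_ ?_
  · rintro ⟨a, x, b, y⟩ hp
    simp only [Finset.mem_filter, mem_Qf] at hp ⊢
    obtain ⟨⟨⟨h1, h2, h3, h4⟩, hoa, hob, hs⟩, hP⟩ := hp
    exact ⟨⟨⟨h3, h4, h1, h2⟩, hob, hoa, by rw [Nat.add_comm]; exact hs⟩, hP⟩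
  · rintro ⟨a, x, b, y⟩ hp
    simp only [Finset.mem_filter, mem_Qf] at hp ⊢
    obtain ⟨⟨⟨h1, h2, h3, h4⟩, hoa, hob, hs⟩, hP⟩ := hp
    exact ⟨⟨⟨h3, h4, h1, h2⟩, hob, hoa, by rw [Nat.add_comm]; exact hs⟩, hP⟩
  · rintro ⟨a, x, b, y⟩ _; rfl
  · rintro ⟨a, x, b, y⟩ _; rfl
  · rintro ⟨a, x, b, y⟩ _; rfl

lemma no_diag {m : ℕ} (hm : Odd m) {p : ℕ × ℕ × ℕ × ℕ} (hp : p ∈ Qf m) :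
    p.2.1 ≠ p.2.2.2 := by
  obtain ⟨a, x, b, y⟩ := p
  obtain ⟨-, hoa, hob, hs⟩ := mem_Qf.mp hp
  intro h
  dsimp only at h hs
  subst h
  have : (a + b) * x = m := by rw [← hs]; ring
  have he : Even ((a + b) * x) := (hoa.add_odd hob).mul_right x
  rw [this] at he
  exact ((Nat.not_odd_iff_even.mpr he)) hm

/-- `∑_{Qf} ((x-y):ℚ)² = 2 ∑_{Uf, O<E} c²` -/
lemma sum_sub_sq {m : ℕ} (hm : Odd m) :
    ∑ p ∈ Qf m, ((p.2.1 : ℚ) - p.2.2.2) ^ 2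
      = 2 * ∑ p ∈ (Uf m).filter (fun p => p.2.2.1 < p.1), (p.2.2.2 : ℚ) ^ 2 := by
  have hsplit := Finset.sum_filter_add_sum_filter_not (Qf m)
    (fun p => p.2.1 < p.2.2.2) (fun p => ((p.2.1 : ℚ) - p.2.2.2) ^ 2)
  have hcongr : (Qf m).filter (fun p => ¬ p.2.1 < p.2.2.2)
      = (Qf m).filter (fun p => p.2.2.2 < p.2.1) := by
    apply Finset.filter_congr
    intro p hp
    have := no_diag hm hp
    omega
  -- x<y part equals x>y part
  have hswap : ∑ p ∈ (Qf m).filter (fun p => p.2.1 < p.2.2.2), ((p.2.1 : ℚ) - p.2.2.2) ^ 2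
      = ∑ p ∈ (Qf m).filter (fun p => p.2.2.2 < p.2.1), ((p.2.1 : ℚ) - p.2.2.2) ^ 2 := by
    rw [Qf_swap m (fun p => p.2.1 < p.2.2.2) (fun p => ((p.2.1 : ℚ) - p.2.2.2) ^ 2)]
    apply Finset.sum_congr rfl
    intro p _
    ring
  -- x>y part equals the U-sum
  have hbij : ∑ p ∈ (Qf m).filter (fun p => p.2.2.2 < p.2.1), ((p.2.1 : ℚ) - p.2.2.2) ^ 2
      = ∑ p ∈ (Uf m).filter (fun p => p.2.2.1 < p.1), (p.2.2.2 : ℚ) ^ 2 := by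
    refine Finset.sum_nbij' (fun p => (p.1 + p.2.2.1, p.2.2.2, p.1, p.2.1 - p.2.2.2))
      (fun p => (p.2.2.1, p.2.1 + p.2.2.2, p.1 - p.2.2.1, p.2.1)) ?_ ?_ ?_ ?_ ?_
    · rintro ⟨a, x, b, y⟩ hp
      simp only [Finset.mem_filter, mem_Qf] at hp
      obtain ⟨⟨⟨⟨ha, -⟩, ⟨hx, -⟩, ⟨hb, -⟩, ⟨hy, -⟩⟩, hoa, hob, hs⟩, hyx⟩ := hp
      obtain ⟨c, rfl⟩ : ∃ c, x = y + c := ⟨x - y, by omega⟩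
      have hc : 0 < c := by omega
      simp only [Finset.mem_filter, mem_Uf]
      have hsum : (a + b) * y + a * ((y + c) - y) = m := by
        have h2 : (y + c) - y = c := by omega
        rw [h2, ← hs]; ring
      have hbox := box_of (by omega : 0 < a + b) hy ha (by omega : 0 < (y + c) - y) hsum
      refine ⟨⟨mem_quadBox.mp hbox, hoa.add_odd hob, hoa, hsum⟩, by omega⟩
    · rintro ⟨E, u, O, c⟩ hp
      simp only [Finset.mem_filter, mem_Uf] at hp
      obtain ⟨⟨⟨⟨hE, -⟩, ⟨hu, -⟩, ⟨hO, -⟩, ⟨hc, -⟩⟩, heE, hoO, hs⟩, hOE⟩ := hp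
      obtain ⟨t, rfl⟩ : ∃ t, E = O + t := ⟨E - O, by omega⟩
      have ht : 0 < t := by omega
      simp only [Finset.mem_filter, mem_Qf]
      have hot : Odd t := by
        rw [Nat.even_iff] at heE; rw [Nat.odd_iff] at hoO ⊢; omega
      have hsum : O * (u + c) + ((O + t) - O) * u = m := by
        have h2 : (O + t) - O = t := by omega
        rw [h2, ← hs]; ring
      have hbox := box_of hO (by omega : 0 < u + c) (by omega : 0 < (O + t) - O) hu hsum
      refine ⟨⟨mem_quadBox.mp hbox, hoO, ?_, hsum⟩, by omega⟩
      · have h2 : (O + t) - O = t := by omega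
        rw [h2]; exact hot
    · rintro ⟨a, x, b, y⟩ hp
      simp only [Finset.mem_filter, mem_Qf] at hp
      obtain ⟨-, hyx⟩ := hp
      simp only [Prod.mk.injEq, true_and, and_true]
      omega
    · rintro ⟨E, u, O, c⟩ hp
      simp only [Finset.mem_filter, mem_Uf] at hp
      obtain ⟨-, hOE⟩ := hp
      simp only [Prod.mk.injEq, true_and, and_true]
      omega
    · rintro ⟨a, x, b, y⟩ hp
      simp only [Finset.mem_filter, mem_Qf] at hp
      obtain ⟨-, hyx⟩ := hp
      rw [Nat.cast_sub (by omega : y ≤ x)]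
  rw [← hsplit, hcongr, hswap, hbij]
  ring

/-- `∑_{Qf} ((x+y):ℚ)² = ∑_{c∣m}(c-1)c² + 2 ∑_{Uf, u<c} c²` -/
lemma sum_add_sq {m : ℕ} (hm : Odd m) :
    ∑ p ∈ Qf m, ((p.2.1 : ℚ) + p.2.2.2) ^ 2
      = (∑ c ∈ m.divisors, ((c : ℚ) - 1) * (c : ℚ) ^ 2)
        + 2 * ∑ p ∈ (Uf m).filter (fun p => p.2.1 < p.2.2.2), (p.2.2.2 : ℚ) ^ 2 := by
  have hm0 : 0 < m := hm.pos
  set w : ℕ × ℕ × ℕ × ℕ → ℚ := fun p => ((p.2.1 : ℚ) + p.2.2.2) ^ 2 with hw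
  have hsplit := Finset.sum_filter_add_sum_filter_not (Qf m) (fun p => p.1 < p.2.2.1) w
  have hsplit2 := Finset.sum_filter_add_sum_filter_not
    ((Qf m).filter (fun p => ¬ p.1 < p.2.2.1)) (fun p => p.1 = p.2.2.1) w
  rw [Finset.filter_filter, Finset.filter_filter] at hsplit2
  have hc1 : (Qf m).filter (fun p => ¬ p.1 < p.2.2.1 ∧ p.1 = p.2.2.1)
      = (Qf m).filter (fun p => p.1 = p.2.2.1) := by
    apply Finset.filter_congr; intro p hp; omega
  have hc2 : (Qf m).filter (fun p => ¬ p.1 < p.2.2.1 ∧ ¬ p.1 = p.2.2.1)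
      = (Qf m).filter (fun p => p.2.2.1 < p.1) := by
    apply Finset.filter_congr; intro p hp; omega
  rw [hc1, hc2] at hsplit2
  have hswap : ∑ p ∈ (Qf m).filter (fun p => p.1 < p.2.2.1), w p
      = ∑ p ∈ (Qf m).filter (fun p => p.2.2.1 < p.1), w p := by
    rw [Qf_swap m (fun p => p.1 < p.2.2.1) w]
    apply Finset.sum_congr rfl
    intro p _
    simp only [hw]
    ring
  -- diagonal part a = b
  have hdiag : ∑ p ∈ (Qf m).filter (fun p => p.1 = p.2.2.1), w p
      = ∑ c ∈ m.divisors, ((c : ℚ) - 1) * (c : ℚ) ^ 2 := by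
    have hcard : ∀ c ∈ m.divisors, ((c : ℚ) - 1) * (c : ℚ) ^ 2
        = ∑ _x ∈ Finset.Ioo 0 c, (c : ℚ) ^ 2 := by
      intro c hc
      have hc0 : 0 < c := Nat.pos_of_mem_divisors hc
      rw [Finset.sum_const, Nat.card_Ioo, nsmul_eq_mul]
      have h1 : ((c - 0 - 1 : ℕ) : ℚ) = (c : ℚ) - 1 := by
        have h2 : (1 : ℕ) ≤ c := hc0
        rw [Nat.sub_zero, Nat.cast_sub h2, Nat.cast_one]
      rw [h1]
    rw [Finset.sum_congr rfl hcard, Finset.sum_sigma']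
    refine Finset.sum_nbij' (fun p => (⟨p.2.1 + p.2.2.2, p.2.1⟩ : (_ : ℕ) × ℕ))
      (fun q => (m / q.1, q.2, m / q.1, q.1 - q.2)) ?_ ?_ ?_ ?_ ?_
    · rintro ⟨a, x, b, y⟩ hp
      simp only [Finset.mem_filter, mem_Qf] at hp
      obtain ⟨⟨⟨⟨ha, -⟩, ⟨hx, -⟩, ⟨hb, -⟩, ⟨hy, -⟩⟩, hoa, hob, hs⟩, hab⟩ := hp
      subst hab
      have hsum : a * (x + y) = m := by rw [← hs]; ring
      have hdvd : (x + y) ∣ m := Dvd.intro a (by rw [← hsum]; ring)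
      simp only [Finset.mem_sigma, Nat.mem_divisors, Finset.mem_Ioo]
      exact ⟨⟨hdvd, hm0.ne'⟩, by omega, by omega⟩
    · rintro ⟨c, x⟩ hq
      simp only [Finset.mem_sigma, Nat.mem_divisors, Finset.mem_Ioo] at hq
      obtain ⟨⟨hcm, -⟩, hx0, hxc⟩ := hq
      have hc0 : 0 < c := by omega
      have ha0 : 0 < m / c := Nat.div_pos (Nat.le_of_dvd hm0 hcm) hc0
      have hsum : m / c * x + m / c * (c - x) = m := by
        have h1 : x + (c - x) = c := by omega
        calc m / c * x + m / c * (c - x) = m / c * (x + (c - x)) := by ring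
        _ = m / c * c := by rw [h1]
        _ = m := Nat.div_mul_cancel hcm
      simp only [Finset.mem_filter, mem_Qf]
      have hoa : Odd (m / c) := hm.of_dvd_nat (Nat.div_dvd_of_dvd hcm)
      exact ⟨⟨mem_quadBox.mp (box_of ha0 hx0 ha0 (by omega) hsum), hoa, hoa, hsum⟩, trivial⟩
    · rintro ⟨a, x, b, y⟩ hp
      simp only [Finset.mem_filter, mem_Qf] at hp
      obtain ⟨⟨⟨⟨ha, -⟩, ⟨hx, -⟩, ⟨hb, -⟩, ⟨hy, -⟩⟩, hoa, hob, hs⟩, hab⟩ := hp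
      subst hab
      have hsum : a * (x + y) = m := by rw [← hs]; ring
      have h1 : m / (x + y) = a := by
        rw [← hsum, Nat.mul_comm, Nat.mul_div_cancel_left _ (by omega : 0 < x + y)]
      simp only [Prod.mk.injEq, h1, true_and, and_true]
      omega
    · rintro ⟨c, x⟩ hq
      simp only [Finset.mem_sigma, Nat.mem_divisors, Finset.mem_Ioo] at hq
      obtain ⟨⟨hcm, -⟩, hx0, hxc⟩ := hq
      have h1 : x + (c - x) = c := by omega
      simp only [h1]
    · rintro ⟨a, x, b, y⟩ hp
      simp only [hw]
      push_cast
      ring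
  -- off-diagonal part b < a
  have hoff : ∑ p ∈ (Qf m).filter (fun p => p.2.2.1 < p.1), w p
      = ∑ p ∈ (Uf m).filter (fun p => p.2.1 < p.2.2.2), (p.2.2.2 : ℚ) ^ 2 := by
    refine Finset.sum_nbij' (fun p => (p.1 - p.2.2.1, p.2.1, p.2.2.1, p.2.1 + p.2.2.2))
      (fun p => (p.2.2.1 + p.1, p.2.1, p.2.2.1, p.2.2.2 - p.2.1)) ?_ ?_ ?_ ?_ ?_
    · rintro ⟨a, x, b, y⟩ hp
      simp only [Finset.mem_filter, mem_Qf] at hp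
      obtain ⟨⟨⟨⟨ha, -⟩, ⟨hx, -⟩, ⟨hb, -⟩, ⟨hy, -⟩⟩, hoa, hob, hs⟩, hba⟩ := hp
      obtain ⟨t, rfl⟩ : ∃ t, a = b + t := ⟨a - b, by omega⟩
      have ht : 0 < t := by omega
      have h2 : (b + t) - b = t := by omega
      have hsum : ((b + t) - b) * x + b * (x + y) = m := by rw [h2, ← hs]; ring
      have het : Even t := by
        rw [Nat.odd_iff] at hoa hob; rw [Nat.even_iff]; omega
      simp only [Finset.mem_filter, mem_Uf]
      refine ⟨⟨mem_quadBox.mp (box_of (by omega) hx hb (by omega) hsum), ?_, hob, hsum⟩, by omega⟩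
      rw [h2]; exact het
    · rintro ⟨E, u, O, c⟩ hp
      simp only [Finset.mem_filter, mem_Uf] at hp
      obtain ⟨⟨⟨⟨hE, -⟩, ⟨hu, -⟩, ⟨hO, -⟩, ⟨hc, -⟩⟩, heE, hoO, hs⟩, huc⟩ := hp
      obtain ⟨s, rfl⟩ : ∃ s, c = u + s := ⟨c - u, by omega⟩
      have hs0 : 0 < s := by omega
      have h2 : (u + s) - u = s := by omega
      have hsum : (O + E) * u + O * ((u + s) - u) = m := by rw [h2, ← hs]; ring
      have hOE : Odd (O + E) := hoO.add_even heE
      simp only [Finset.mem_filter, mem_Qf]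
      refine ⟨⟨mem_quadBox.mp (box_of (by omega) hu hO (by omega) hsum), hOE, hoO, hsum⟩, ?_⟩
      have hE0 : 0 < E := hE
      omega
    · rintro ⟨a, x, b, y⟩ hp
      simp only [Finset.mem_filter, mem_Qf] at hp
      obtain ⟨-, hba⟩ := hp
      simp only [Prod.mk.injEq, true_and, and_true]
      omega
    · rintro ⟨E, u, O, c⟩ hp
      simp only [Finset.mem_filter, mem_Uf] at hp
      obtain ⟨⟨-, -, -, hs⟩, huc⟩ := hp
      simp only [Prod.mk.injEq, true_and, and_true]
      omega
    · rintro ⟨a, x, b, y⟩ hp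
      simp only [hw]
      push_cast
      ring
  rw [← hsplit, ← hsplit2, hswap, hdiag, hoff]
  ring


/-- the key Liouville bijection: `{E<O} ≃ {u>c}` on `Uf`, preserving `c`. -/
lemma U_bij {m : ℕ} :
    ∑ p ∈ (Uf m).filter (fun p => p.1 < p.2.2.1), (p.2.2.2 : ℚ) ^ 2
      = ∑ p ∈ (Uf m).filter (fun p => p.2.2.2 < p.2.1), (p.2.2.2 : ℚ) ^ 2 := by
  refine Finset.sum_nbij' (fun p => (p.1, p.2.1 + p.2.2.2, p.2.2.1 - p.1, p.2.2.2))
    (fun p => (p.1, p.2.1 - p.2.2.2, p.2.2.1 + p.1, p.2.2.2)) ?_ ?_ ?_ ?_ ?_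
  · rintro ⟨E, u, O, c⟩ hp
    simp only [Finset.mem_filter, mem_Uf] at hp
    obtain ⟨⟨⟨⟨hE, -⟩, ⟨hu, -⟩, ⟨hO, -⟩, ⟨hc, -⟩⟩, heE, hoO, hs⟩, hEO⟩ := hp
    obtain ⟨t, rfl⟩ : ∃ t, O = E + t := ⟨O - E, by omega⟩
    have ht : 0 < t := by omega
    have h2 : (E + t) - E = t := by omega
    have hsum : E * (u + c) + ((E + t) - E) * c = m := by rw [h2, ← hs]; ring
    have hot : Odd t := by
      rw [Nat.even_iff] at heE; rw [Nat.odd_iff] at hoO ⊢; omega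
    simp only [Finset.mem_filter, mem_Uf]
    refine ⟨⟨mem_quadBox.mp (box_of (by omega) (by omega) (by omega) hc hsum), heE, ?_, hsum⟩,
      by omega⟩
    rw [h2]; exact hot
  · rintro ⟨E, u, O, c⟩ hp
    simp only [Finset.mem_filter, mem_Uf] at hp
    obtain ⟨⟨⟨⟨hE, -⟩, ⟨hu, -⟩, ⟨hO, -⟩, ⟨hc, -⟩⟩, heE, hoO, hs⟩, hcu⟩ := hp
    obtain ⟨sx, rfl⟩ : ∃ sx, u = c + sx := ⟨u - c, by omega⟩
    have hsx : 0 < sx := by omega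
    have h2 : (c + sx) - c = sx := by omega
    have hsum : E * ((c + sx) - c) + (O + E) * c = m := by rw [h2, ← hs]; ring
    simp only [Finset.mem_filter, mem_Uf]
    refine ⟨⟨mem_quadBox.mp (box_of (by omega) (by omega) (by omega) hc hsum), heE,
      hoO.add_even heE, hsum⟩, by omega⟩
  · rintro ⟨E, u, O, c⟩ hp
    simp only [Finset.mem_filter, mem_Uf] at hp
    obtain ⟨-, hEO⟩ := hp
    simp only [Prod.mk.injEq, true_and, and_true]
    omega
  · rintro ⟨E, u, O, c⟩ hp
    simp only [Finset.mem_filter, mem_Uf] at hp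
    obtain ⟨-, hcu⟩ := hp
    simp only [Prod.mk.injEq, true_and, and_true]
    omega
  · rintro ⟨E, u, O, c⟩ _
    rfl

lemma U_no_EO {m : ℕ} {p : ℕ × ℕ × ℕ × ℕ} (hp : p ∈ Uf m) : p.1 ≠ p.2.2.1 := by
  obtain ⟨-, heE, hoO, -⟩ := mem_Uf.mp hp
  intro h
  rw [h] at heE
  rw [Nat.even_iff] at heE; rw [Nat.odd_iff] at hoO; omega

lemma U_no_uc {m : ℕ} (hm : Odd m) :
    ∑ p ∈ (Uf m).filter (fun p => p.2.1 = p.2.2.2), (p.2.2.2 : ℚ) ^ 2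
      = ∑ c ∈ m.divisors, (((m / c) / 2 : ℕ) : ℚ) * (c : ℚ) ^ 2 := by
  have hm0 : 0 < m := hm.pos
  have hconst : ∀ c ∈ m.divisors, (((m / c) / 2 : ℕ) : ℚ) * (c : ℚ) ^ 2
      = ∑ _j ∈ Finset.Ioc 0 ((m / c) / 2), (c : ℚ) ^ 2 := by
    intro c hc
    rw [Finset.sum_const, Nat.card_Ioc, nsmul_eq_mul, Nat.sub_zero]
  rw [Finset.sum_congr rfl hconst, Finset.sum_sigma']
  refine Finset.sum_nbij' (fun p => (⟨p.2.2.2, p.1 / 2⟩ : (_ : ℕ) × ℕ))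
    (fun q => (2 * q.2, q.1, m / q.1 - 2 * q.2, q.1)) ?_ ?_ ?_ ?_ ?_
  · rintro ⟨E, u, O, c⟩ hp
    simp only [Finset.mem_filter, mem_Uf] at hp
    obtain ⟨⟨⟨⟨hE, -⟩, ⟨hu, -⟩, ⟨hO, -⟩, ⟨hc, -⟩⟩, heE, hoO, hs⟩, huc⟩ := hp
    subst huc
    have hsum : (E + O) * u = m := by rw [← hs]; ring
    have hdvd : u ∣ m := Dvd.intro (E + O) (by rw [Nat.mul_comm]; exact hsum)
    have ht : m / u = E + O := by
      rw [← hsum, Nat.mul_comm, Nat.mul_div_cancel_left _ hu]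
    simp only [Finset.mem_sigma, Nat.mem_divisors, Finset.mem_Ioc, ht]
    rw [Nat.even_iff] at heE; rw [Nat.odd_iff] at hoO
    exact ⟨⟨hdvd, hm0.ne'⟩, by omega, by omega⟩
  · rintro ⟨c, j⟩ hq
    simp only [Finset.mem_sigma, Nat.mem_divisors, Finset.mem_Ioc] at hq
    obtain ⟨⟨hcm, -⟩, hj0, hjle⟩ := hq
    have hc0 : 0 < c := by
      rcases Nat.eq_zero_or_pos c with h | h
      · subst h; simp at hjle; omega
      · exact h
    have hodd : Odd (m / c) := hm.of_dvd_nat (Nat.div_dvd_of_dvd hcm)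
    rw [Nat.odd_iff] at hodd
    have h2j : 2 * j < m / c := by omega
    have hsum : 2 * j * c + (m / c - 2 * j) * c = m := by
      have h1 : 2 * j + (m / c - 2 * j) = m / c := by omega
      calc 2 * j * c + (m / c - 2 * j) * c = (2 * j + (m / c - 2 * j)) * c := by ring
      _ = (m / c) * c := by rw [h1]
      _ = m := Nat.div_mul_cancel hcm
    simp only [Finset.mem_filter, mem_Uf]
    refine ⟨⟨mem_quadBox.mp (box_of (by omega) hc0 (by omega) hc0 hsum),
      (even_two_mul j), ?_, hsum⟩, trivial⟩
    rw [Nat.odd_iff]; omega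
  · rintro ⟨E, u, O, c⟩ hp
    simp only [Finset.mem_filter, mem_Uf] at hp
    obtain ⟨⟨⟨⟨hE, -⟩, ⟨hu, -⟩, ⟨hO, -⟩, ⟨hc, -⟩⟩, heE, hoO, hs⟩, huc⟩ := hp
    subst huc
    have hsum : (E + O) * u = m := by rw [← hs]; ring
    have ht : m / u = E + O := by
      rw [← hsum, Nat.mul_comm, Nat.mul_div_cancel_left _ hu]
    rw [Nat.even_iff] at heE
    simp only [Prod.mk.injEq, ht, true_and, and_true]
    omega
  · rintro ⟨c, j⟩ hq
    simp only [Finset.mem_sigma, Nat.mem_divisors, Finset.mem_Ioc] at hq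
    obtain ⟨⟨hcm, -⟩, hj0, hjle⟩ := hq
    have h1 : 2 * j / 2 = j := by omega
    simp only [h1]
  · rintro ⟨E, u, O, c⟩ hp
    rfl


def bnat (m : ℕ) : ℕ :=
  ∑ p ∈ (quadBox m).filter
      (fun p => Odd p.1 ∧ Odd p.2.2.1 ∧
        p.2.1 < p.2.2.2 ∧ p.1 * p.2.1 + p.2.2.1 * p.2.2.2 = m),
    p.2.1 * p.2.2.2

lemma eight_bnat {m : ℕ} (hm : Odd m) :
    8 * (bnat m : ℚ) = ((ArithmeticFunction.sigma 3 m : ℕ) : ℚ)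
      - (m : ℚ) * ((ArithmeticFunction.sigma 1 m : ℕ) : ℚ) := by
  have hm0 : 0 < m := hm.pos
  -- bnat as a rational sum over Qf filtered by x<y
  have hbnat : (bnat m : ℚ)
      = ∑ p ∈ (Qf m).filter (fun p => p.2.1 < p.2.2.2), ((p.2.1 : ℚ) * p.2.2.2) := by
    have hset : (Qf m).filter (fun p => p.2.1 < p.2.2.2)
        = (quadBox m).filter (fun p => Odd p.1 ∧ Odd p.2.2.1 ∧
            p.2.1 < p.2.2.2 ∧ p.1 * p.2.1 + p.2.2.1 * p.2.2.2 = m) := by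
      rw [Qf, Finset.filter_filter]
      apply Finset.filter_congr
      intro p hp
      constructor
      · rintro ⟨⟨h1, h2, h3⟩, h4⟩; exact ⟨h1, h2, h4, h3⟩
      · rintro ⟨h1, h2, h3, h4⟩; exact ⟨⟨h1, h2, h4⟩, h3⟩
    rw [hset, bnat]
    push_cast
    rfl
  -- doubling
  have hdouble : ∑ p ∈ Qf m, ((p.2.1 : ℚ) * p.2.2.2)
      = 2 * ∑ p ∈ (Qf m).filter (fun p => p.2.1 < p.2.2.2), ((p.2.1 : ℚ) * p.2.2.2) := by
    have hsplit := Finset.sum_filter_add_sum_filter_not (Qf m)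
      (fun p => p.2.1 < p.2.2.2) (fun p => ((p.2.1 : ℚ) * p.2.2.2))
    have hcongr : (Qf m).filter (fun p => ¬ p.2.1 < p.2.2.2)
        = (Qf m).filter (fun p => p.2.2.2 < p.2.1) := by
      apply Finset.filter_congr
      intro p hp
      have := no_diag hm hp
      omega
    have hswap : ∑ p ∈ (Qf m).filter (fun p => p.2.1 < p.2.2.2), ((p.2.1 : ℚ) * p.2.2.2)
        = ∑ p ∈ (Qf m).filter (fun p => p.2.2.2 < p.2.1), ((p.2.1 : ℚ) * p.2.2.2) := by
      rw [Qf_swap m (fun p => p.2.1 < p.2.2.2) (fun p => ((p.2.1 : ℚ) * p.2.2.2))]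
      apply Finset.sum_congr rfl
      intro p _
      ring
    rw [← hsplit, hcongr, ← hswap]
    ring
  -- difference of squares
  have hsq : ∑ p ∈ Qf m, (4 * (p.2.1 : ℚ) * p.2.2.2)
      = (∑ p ∈ Qf m, ((p.2.1 : ℚ) + p.2.2.2) ^ 2)
        - (∑ p ∈ Qf m, ((p.2.1 : ℚ) - p.2.2.2) ^ 2) := by
    rw [← Finset.sum_sub_distrib]
    apply Finset.sum_congr rfl
    intro p _
    ring
  -- region algebra on U
  have hpar := Finset.sum_filter_add_sum_filter_not (Uf m)
    (fun p => p.1 < p.2.2.1) (fun p => (p.2.2.2 : ℚ) ^ 2)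
  have hparc : (Uf m).filter (fun p => ¬ p.1 < p.2.2.1)
      = (Uf m).filter (fun p => p.2.2.1 < p.1) := by
    apply Finset.filter_congr
    intro p hp
    have := U_no_EO hp
    omega
  rw [hparc] at hpar
  have htri1 := Finset.sum_filter_add_sum_filter_not (Uf m)
    (fun p => p.2.1 < p.2.2.2) (fun p => (p.2.2.2 : ℚ) ^ 2)
  have htri2 := Finset.sum_filter_add_sum_filter_not
    ((Uf m).filter (fun p => ¬ p.2.1 < p.2.2.2)) (fun p => p.2.1 = p.2.2.2)
    (fun p => (p.2.2.2 : ℚ) ^ 2)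
  rw [Finset.filter_filter, Finset.filter_filter] at htri2
  have htc1 : (Uf m).filter (fun p => ¬ p.2.1 < p.2.2.2 ∧ p.2.1 = p.2.2.2)
      = (Uf m).filter (fun p => p.2.1 = p.2.2.2) := by
    apply Finset.filter_congr; intro p hp; omega
  have htc2 : (Uf m).filter (fun p => ¬ p.2.1 < p.2.2.2 ∧ ¬ p.2.1 = p.2.2.2)
      = (Uf m).filter (fun p => p.2.2.2 < p.2.1) := by
    apply Finset.filter_congr; intro p hp; omega
  rw [htc1, htc2] at htri2
  -- key: ∑_{O<E} = ∑_{u<c} + ∑_{u=c}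
  have hkey : ∑ p ∈ (Uf m).filter (fun p => p.2.2.1 < p.1), (p.2.2.2 : ℚ) ^ 2
      = (∑ p ∈ (Uf m).filter (fun p => p.2.1 < p.2.2.2), (p.2.2.2 : ℚ) ^ 2)
        + ∑ p ∈ (Uf m).filter (fun p => p.2.1 = p.2.2.2), (p.2.2.2 : ℚ) ^ 2 := by
    have hb := U_bij (m := m)
    linarith [hpar, htri1, htri2]
  -- put everything together
  have hmain : 8 * (bnat m : ℚ)
      = (∑ c ∈ m.divisors, ((c : ℚ) - 1) * (c : ℚ) ^ 2)
        - 2 * ∑ c ∈ m.divisors, (((m / c) / 2 : ℕ) : ℚ) * (c : ℚ) ^ 2 := by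
    have h4 : ∑ p ∈ Qf m, (4 * (p.2.1 : ℚ) * p.2.2.2) = 8 * (bnat m : ℚ) := by
      have : ∑ p ∈ Qf m, (4 * (p.2.1 : ℚ) * p.2.2.2)
          = 4 * ∑ p ∈ Qf m, ((p.2.1 : ℚ) * p.2.2.2) := by
        rw [Finset.mul_sum]; apply Finset.sum_congr rfl; intro p _; ring
      rw [this, hdouble, hbnat]; ring
    rw [← h4, hsq, sum_add_sq hm, sum_sub_sq hm, U_no_uc hm] at *
    linarith [hkey]
  rw [hmain]
  have hterm : ∀ c ∈ m.divisors,
      ((c : ℚ) - 1) * (c : ℚ) ^ 2 - 2 * ((((m / c) / 2 : ℕ) : ℚ) * (c : ℚ) ^ 2)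
        = (c : ℚ) ^ 3 - (m : ℚ) * c := by
    intro c hc
    obtain ⟨hcm, -⟩ := Nat.mem_divisors.mp hc
    have hodd : Odd (m / c) := hm.of_dvd_nat (Nat.div_dvd_of_dvd hcm)
    have h2 : 2 * ((m / c) / 2) + 1 = m / c := by rw [Nat.odd_iff] at hodd; omega
    have h2q : 2 * ((((m / c) / 2 : ℕ)) : ℚ) = ((m / c : ℕ) : ℚ) - 1 := by
      have h2' : (2 : ℚ) * (((m / c) / 2 : ℕ) : ℚ) + 1 = ((m / c : ℕ) : ℚ) := by
        exact_mod_cast h2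
      linarith
    have h3 : ((m / c : ℕ) : ℚ) * c = m := by
      exact_mod_cast Nat.div_mul_cancel hcm
    have : 2 * ((((m / c) / 2 : ℕ) : ℚ) * (c : ℚ) ^ 2)
        = (((m / c : ℕ) : ℚ) - 1) * (c : ℚ) ^ 2 := by
      rw [← h2q]; ring
    rw [this]
    have : ((m / c : ℕ) : ℚ) * (c : ℚ) ^ 2 = (m : ℚ) * c := by
      calc ((m / c : ℕ) : ℚ) * (c : ℚ) ^ 2 = (((m / c : ℕ) : ℚ) * c) * c := by ring
      _ = (m : ℚ) * c := by rw [h3]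
    nlinarith [this]
  rw [Finset.mul_sum, ← Finset.sum_sub_distrib, Finset.sum_congr rfl hterm,
    Finset.sum_sub_distrib]
  congr 1
  · rw [ArithmeticFunction.sigma_apply]
    push_cast
    rfl
  · rw [ArithmeticFunction.sigma_one_apply]
    push_cast
    rw [Finset.mul_sum]

lemma sum_alpha1 {m : ℕ} (hm : Odd m) :
    ∑ d ∈ m.divisors, alpha1 (m / d) = bnat m := by
  have hm0 : 0 < m := hm.pos
  unfold alpha1 bnat
  rw [Finset.sum_sigma']
  refine Finset.sum_nbij'
    (fun q => (q.1 * q.2.1, q.2.2.1, q.1 * q.2.2.2.1, q.2.2.2.2))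
    (fun p => ⟨Nat.gcd p.1 p.2.2.1,
      (p.1 / Nat.gcd p.1 p.2.2.1, p.2.1, p.2.2.1 / Nat.gcd p.1 p.2.2.1, p.2.2.2)⟩)
    ?_ ?_ ?_ ?_ ?_
  · rintro ⟨d, a, x, b, y⟩ hq
    simp only [Finset.mem_sigma, Nat.mem_divisors, Finset.mem_filter, mem_quadBox] at hq
    obtain ⟨⟨hdm, -⟩, ⟨⟨ha, -⟩, ⟨hx, -⟩, ⟨hb, -⟩, ⟨hy, -⟩⟩, hgcd, hoa, hob, hxy, hsum⟩ := hq
    have hd : 0 < d := Nat.pos_of_dvd_of_pos hdm hm0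
    have hod : Odd d := hm.of_dvd_nat hdm
    have hsum' : d * a * x + d * b * y = m := by
      have : d * (a * x + b * y) = d * (m / d) := by rw [hsum]
      rw [Nat.mul_div_cancel' hdm] at this
      rw [← this]; ring
    refine Finset.mem_filter.mpr ⟨box_of (Nat.mul_pos hd ha) hx (Nat.mul_pos hd hb) hy hsum',
      hod.mul hoa, hod.mul hob, hxy, hsum'⟩
  · rintro ⟨a, x, b, y⟩ hp
    simp only [Finset.mem_filter, mem_quadBox] at hp
    obtain ⟨⟨⟨ha, -⟩, ⟨hx, -⟩, ⟨hb, -⟩, ⟨hy, -⟩⟩, hoa, hob, hxy, hsum⟩ := hp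
    set g := Nat.gcd a b with hg
    have hga : g ∣ a := Nat.gcd_dvd_left a b
    have hgb : g ∣ b := Nat.gcd_dvd_right a b
    have hg0 : 0 < g := Nat.gcd_pos_of_pos_left b ha
    have hgm : g ∣ m := by rw [← hsum]; exact dvd_add (hga.mul_right x) (hgb.mul_right y)
    have hsum' : a / g * x + b / g * y = m / g := by
      have h1 : g * (a / g * x + b / g * y) = m := by
        rw [Nat.mul_add, ← Nat.mul_assoc, ← Nat.mul_assoc,
          Nat.mul_div_cancel' hga, Nat.mul_div_cancel' hgb, hsum]
      rw [← h1, Nat.mul_div_cancel_left _ hg0]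
    have hag : 0 < a / g := Nat.div_pos (Nat.le_of_dvd ha hga) hg0
    have hbg : 0 < b / g := Nat.div_pos (Nat.le_of_dvd hb hgb) hg0
    refine Finset.mem_sigma.mpr ⟨Nat.mem_divisors.mpr ⟨hgm, hm0.ne'⟩, ?_⟩
    refine Finset.mem_filter.mpr ⟨box_of hag hx hbg hy hsum',
      Nat.coprime_div_gcd_div_gcd hg0, hoa.of_dvd_nat (Nat.div_dvd_of_dvd hga),
      hob.of_dvd_nat (Nat.div_dvd_of_dvd hgb), hxy, hsum'⟩
  · rintro ⟨d, a, x, b, y⟩ hq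
    simp only [Finset.mem_sigma, Nat.mem_divisors, Finset.mem_filter, mem_quadBox] at hq
    obtain ⟨⟨hdm, -⟩, ⟨⟨ha, -⟩, -, ⟨hb, -⟩, -⟩, hgcd, -⟩ := hq
    have hd : 0 < d := Nat.pos_of_dvd_of_pos hdm hm0
    have h1 : Nat.gcd (d * a) (d * b) = d := by rw [Nat.gcd_mul_left, hgcd, Nat.mul_one]
    simp only [h1, Nat.mul_div_cancel_left _ hd]
  · rintro ⟨a, x, b, y⟩ hp
    simp only [Finset.mem_filter, mem_quadBox] at hp
    simp only [Nat.mul_div_cancel' (Nat.gcd_dvd_left a b), Nat.mul_div_cancel' (Nat.gcd_dvd_right a b)]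
  · rintro ⟨d, a, x, b, y⟩ _
    rfl

lemma swap_div (n : ℕ) (F : ℕ → ℕ → ℚ) :
    ∑ r ∈ n.divisors, ∑ d ∈ (n / r).divisors, F r d
      = ∑ d ∈ n.divisors, ∑ r ∈ (n / d).divisors, F r d := by
  rw [Finset.sum_sigma', Finset.sum_sigma']
  refine Finset.sum_nbij' (fun q => (⟨q.2, q.1⟩ : (_ : ℕ) × ℕ))
    (fun q => (⟨q.2, q.1⟩ : (_ : ℕ) × ℕ)) ?_ ?_ ?_ ?_ ?_
  · rintro ⟨r, d⟩ hq
    simp only [Finset.mem_sigma, Nat.mem_divisors] at hq ⊢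
    obtain ⟨⟨hr, hn0⟩, hd, -⟩ := hq
    have hnpos : 0 < n := Nat.pos_of_ne_zero hn0
    have hdn : d ∣ n := dvd_trans hd (Nat.div_dvd_of_dvd hr)
    have hd0 : 0 < d := Nat.pos_of_dvd_of_pos hdn hnpos
    have hnd : 0 < n / d := Nat.div_pos (Nat.le_of_dvd hnpos hdn) hd0
    refine ⟨⟨hdn, hn0⟩, ?_, hnd.ne'⟩
    obtain ⟨k, hk⟩ := hd
    have hn' : n = d * (r * k) := by rw [← Nat.mul_div_cancel' hr, hk]; ring
    rw [hn', Nat.mul_div_cancel_left _ hd0]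
    exact Dvd.intro k rfl
  · rintro ⟨d, r⟩ hq
    simp only [Finset.mem_sigma, Nat.mem_divisors] at hq ⊢
    obtain ⟨⟨hd, hn0⟩, hr, -⟩ := hq
    have hnpos : 0 < n := Nat.pos_of_ne_zero hn0
    have hrn : r ∣ n := dvd_trans hr (Nat.div_dvd_of_dvd hd)
    have hr0 : 0 < r := Nat.pos_of_dvd_of_pos hrn hnpos
    have hnr : 0 < n / r := Nat.div_pos (Nat.le_of_dvd hnpos hrn) hr0
    refine ⟨⟨hrn, hn0⟩, ?_, hnr.ne'⟩
    obtain ⟨k, hk⟩ := hr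
    have hn' : n = r * (d * k) := by rw [← Nat.mul_div_cancel' hd, hk]; ring
    rw [hn', Nat.mul_div_cancel_left _ hr0]
    exact Dvd.intro k rfl
  · rintro ⟨r, d⟩ _; rfl
  · rintro ⟨d, r⟩ _; rfl
  · rintro ⟨r, d⟩ _; rfl

end Stmt9Aux

open Stmt9Aux in
theorem stmt9 (n : ℕ) (hn : 1 ≤ n) (hodd : Odd n) :
    ∑ r ∈ n.divisors,
        (r : ℚ) * (ArithmeticFunction.moebius r : ℚ) * (alpha1 (n / r) : ℚ) =
      ((n : ℚ) ^ 2 * ((n : ℚ) - 1)) / 8 *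
        ∑ r ∈ n.divisors, (ArithmeticFunction.moebius r : ℚ) / (r : ℚ) ^ 2 := by
  have hn0 : 0 < n := hn
  -- Möbius inversion for alpha1 on divisors of n
  have hstepB : ∀ k > 0, k ∈ {k : ℕ | k ∣ n} →
      ∑ i ∈ k.divisors, (alpha1 i : ℚ) = (bnat k : ℚ) := by
    intro k hk hkn
    have hodd' : Odd k := hodd.of_dvd_nat hkn
    rw [← Nat.sum_div_divisors k (fun i => (alpha1 i : ℚ))]
    have hb := sum_alpha1 hodd'
    calc ∑ d ∈ k.divisors, (alpha1 (k / d) : ℚ)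
        = ((∑ d ∈ k.divisors, alpha1 (k / d) : ℕ) : ℚ) := by push_cast; rfl
      _ = (bnat k : ℚ) := by rw [hb]
  have hinv := (ArithmeticFunction.sum_eq_iff_sum_mul_moebius_eq_on {k : ℕ | k ∣ n}
    (fun a b hab hb => dvd_trans hab hb)).mp hstepB
  have halpha : ∀ k > 0, k ∣ n → (alpha1 k : ℚ)
      = ∑ d ∈ k.divisors, (ArithmeticFunction.moebius d : ℚ) * (bnat (k / d) : ℚ) := by
    intro k hk hkn
    have := hinv k hk hkn
    rw [← this, Nat.sum_divisorsAntidiagonal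
      (f := fun x y => (ArithmeticFunction.moebius x : ℚ) * (bnat y : ℚ))]
  -- Möbius inversion for sigma functions
  have hσ : ∀ j : ℕ, ∀ k > 0, ∑ d ∈ k.divisors,
      (ArithmeticFunction.moebius d : ℚ) * ((ArithmeticFunction.sigma j (k / d) : ℕ) : ℚ)
        = (k : ℚ) ^ j := by
    intro j
    have h1 : ∀ k, k > 0 → ∑ i ∈ k.divisors, (fun i : ℕ => (i : ℚ) ^ j) i
        = (fun k : ℕ => ((ArithmeticFunction.sigma j k : ℕ) : ℚ)) k := by
      intro k _
      simp only
      have hs : (ArithmeticFunction.sigma j k : ℕ) = ∑ d ∈ k.divisors, d ^ j :=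
        ArithmeticFunction.sigma_apply
      rw [hs]
      push_cast
      rfl
    have h2 := (ArithmeticFunction.sum_eq_iff_sum_mul_moebius_eq
      (f := fun i : ℕ => (i : ℚ) ^ j)
      (g := fun k : ℕ => ((ArithmeticFunction.sigma j k : ℕ) : ℚ))).mp h1
    intro k hk
    have h3 := h2 k hk
    rw [← h3, Nat.sum_divisorsAntidiagonal
      (f := fun x y => (ArithmeticFunction.moebius x : ℚ)
        * ((ArithmeticFunction.sigma j y : ℕ) : ℚ))]
  -- rewrite LHS using halpha and eight_bnat
  have hLHS : (8 : ℚ) * ∑ r ∈ n.divisors,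
      (r : ℚ) * (ArithmeticFunction.moebius r : ℚ) * (alpha1 (n / r) : ℚ)
      = (∑ r ∈ n.divisors, (r : ℚ) * (ArithmeticFunction.moebius r : ℚ)
          * ((n / r : ℕ) : ℚ) ^ 3)
        - ∑ r ∈ n.divisors, (ArithmeticFunction.moebius r : ℚ) * ((n / r : ℕ) : ℚ) ^ 2 := by
    have expand : ∀ r ∈ n.divisors,
        (8 : ℚ) * ((r : ℚ) * (ArithmeticFunction.moebius r : ℚ) * (alpha1 (n / r) : ℚ))
        = ((r : ℚ) * (ArithmeticFunction.moebius r : ℚ) * ((n / r : ℕ) : ℚ) ^ 3)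
          - (r : ℚ) * (ArithmeticFunction.moebius r : ℚ)
            * (∑ d ∈ (n / r).divisors, (ArithmeticFunction.moebius d : ℚ)
              * (((n / r) / d : ℕ) : ℚ) * ((ArithmeticFunction.sigma 1 ((n / r) / d) : ℕ) : ℚ)) := by
      intro r hr
      obtain ⟨hrn, -⟩ := Nat.mem_divisors.mp hr
      have hk : 0 < n / r := Nat.div_pos (Nat.le_of_dvd hn0 hrn) (Nat.pos_of_dvd_of_pos hrn hn0)
      have hkd : n / r ∣ n := Nat.div_dvd_of_dvd hrn
      rw [halpha (n / r) hk hkd]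
      have hsum8 : (8 : ℚ) * ∑ d ∈ (n / r).divisors,
          (ArithmeticFunction.moebius d : ℚ) * (bnat ((n / r) / d) : ℚ)
          = ∑ d ∈ (n / r).divisors, (ArithmeticFunction.moebius d : ℚ)
            * (((ArithmeticFunction.sigma 3 ((n / r) / d) : ℕ) : ℚ)
              - (((n / r) / d : ℕ) : ℚ) * ((ArithmeticFunction.sigma 1 ((n / r) / d) : ℕ) : ℚ)) := by
        rw [Finset.mul_sum]
        apply Finset.sum_congr rfl
        intro d hd
        obtain ⟨hdk, -⟩ := Nat.mem_divisors.mp hd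
        have hodd2 : Odd ((n / r) / d) := hodd.of_dvd_nat
          (dvd_trans (Nat.div_dvd_of_dvd hdk) hkd)
        rw [show (8 : ℚ) * ((ArithmeticFunction.moebius d : ℚ) * (bnat ((n / r) / d) : ℚ))
            = (ArithmeticFunction.moebius d : ℚ) * (8 * (bnat ((n / r) / d) : ℚ)) by ring,
          eight_bnat hodd2]
      have hsplit : ∑ d ∈ (n / r).divisors, (ArithmeticFunction.moebius d : ℚ)
            * (((ArithmeticFunction.sigma 3 ((n / r) / d) : ℕ) : ℚ)
              - (((n / r) / d : ℕ) : ℚ) * ((ArithmeticFunction.sigma 1 ((n / r) / d) : ℕ) : ℚ))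
          = (((n / r : ℕ) : ℚ) ^ 3)
            - ∑ d ∈ (n / r).divisors, (ArithmeticFunction.moebius d : ℚ)
              * (((n / r) / d : ℕ) : ℚ) * ((ArithmeticFunction.sigma 1 ((n / r) / d) : ℕ) : ℚ) := by
        rw [← hσ 3 (n / r) hk, ← Finset.sum_sub_distrib]
        apply Finset.sum_congr rfl
        intro d _
        ring
      calc (8 : ℚ) * ((r : ℚ) * (ArithmeticFunction.moebius r : ℚ)
            * ∑ d ∈ (n / r).divisors, (ArithmeticFunction.moebius d : ℚ) * (bnat ((n / r) / d) : ℚ))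
          = (r : ℚ) * (ArithmeticFunction.moebius r : ℚ)
            * ((8 : ℚ) * ∑ d ∈ (n / r).divisors,
              (ArithmeticFunction.moebius d : ℚ) * (bnat ((n / r) / d) : ℚ)) := by ring
        _ = _ := by rw [hsum8, hsplit]; ring
    rw [Finset.mul_sum, Finset.sum_congr rfl expand, Finset.sum_sub_distrib]
    congr 1
    -- the B-term: swap the double sum and evaluate
    have hB : ∑ r ∈ n.divisors, (r : ℚ) * (ArithmeticFunction.moebius r : ℚ)
          * (∑ d ∈ (n / r).divisors, (ArithmeticFunction.moebius d : ℚ)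
            * (((n / r) / d : ℕ) : ℚ) * ((ArithmeticFunction.sigma 1 ((n / r) / d) : ℕ) : ℚ))
        = ∑ r ∈ n.divisors, (ArithmeticFunction.moebius r : ℚ) * ((n / r : ℕ) : ℚ) ^ 2 := by
      have hF : ∑ r ∈ n.divisors, (r : ℚ) * (ArithmeticFunction.moebius r : ℚ)
            * (∑ d ∈ (n / r).divisors, (ArithmeticFunction.moebius d : ℚ)
              * (((n / r) / d : ℕ) : ℚ) * ((ArithmeticFunction.sigma 1 ((n / r) / d) : ℕ) : ℚ))
          = ∑ r ∈ n.divisors, ∑ d ∈ (n / r).divisors,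
              ((r : ℚ) * (ArithmeticFunction.moebius r : ℚ) * (ArithmeticFunction.moebius d : ℚ)
              * ((n / (r * d) : ℕ) : ℚ) * ((ArithmeticFunction.sigma 1 (n / (r * d)) : ℕ) : ℚ)) := by
        apply Finset.sum_congr rfl
        intro r _
        rw [Finset.mul_sum]
        apply Finset.sum_congr rfl
        intro d _
        rw [Nat.div_div_eq_div_mul]
        ring
      rw [hF, swap_div n (fun r d => (r : ℚ) * (ArithmeticFunction.moebius r : ℚ)
        * (ArithmeticFunction.moebius d : ℚ) * ((n / (r * d) : ℕ) : ℚ)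
        * ((ArithmeticFunction.sigma 1 (n / (r * d)) : ℕ) : ℚ))]
      apply Finset.sum_congr rfl
      intro d hd
      obtain ⟨hdn, -⟩ := Nat.mem_divisors.mp hd
      have hk0 : 0 < n / d := Nat.div_pos (Nat.le_of_dvd hn0 hdn) (Nat.pos_of_dvd_of_pos hdn hn0)
      have hinner : ∑ r ∈ (n / d).divisors,
          ((r : ℚ) * (ArithmeticFunction.moebius r : ℚ) * (ArithmeticFunction.moebius d : ℚ)
          * ((n / (r * d) : ℕ) : ℚ) * ((ArithmeticFunction.sigma 1 (n / (r * d)) : ℕ) : ℚ))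
          = (ArithmeticFunction.moebius d : ℚ) * (((n / d : ℕ) : ℚ) * ∑ r ∈ (n / d).divisors,
            ((ArithmeticFunction.moebius r : ℚ)
              * ((ArithmeticFunction.sigma 1 ((n / d) / r) : ℕ) : ℚ))) := by
        rw [Finset.mul_sum, Finset.mul_sum]
        apply Finset.sum_congr rfl
        intro r hr
        obtain ⟨hrk, -⟩ := Nat.mem_divisors.mp hr
        have h1 : n / (r * d) = (n / d) / r := by
          rw [Nat.div_div_eq_div_mul, Nat.mul_comm]
        have h2 : (r : ℚ) * (((n / d) / r : ℕ) : ℚ) = ((n / d : ℕ) : ℚ) := by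
          exact_mod_cast Nat.mul_div_cancel' hrk
        rw [h1]
        calc (r : ℚ) * (ArithmeticFunction.moebius r : ℚ) * (ArithmeticFunction.moebius d : ℚ)
              * (((n / d) / r : ℕ) : ℚ) * ((ArithmeticFunction.sigma 1 ((n / d) / r) : ℕ) : ℚ)
            = (ArithmeticFunction.moebius d : ℚ) * ((r : ℚ) * (((n / d) / r : ℕ) : ℚ))
              * ((ArithmeticFunction.moebius r : ℚ)
                * ((ArithmeticFunction.sigma 1 ((n / d) / r) : ℕ) : ℚ)) := by ring
          _ = _ := by rw [h2]; ring
      rw [hinner, hσ 1 (n / d) hk0]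
      ring
    rw [hB]
  -- final computation
  have hRHS : (8 : ℚ) * (((n : ℚ) ^ 2 * ((n : ℚ) - 1)) / 8 *
      ∑ r ∈ n.divisors, (ArithmeticFunction.moebius r : ℚ) / (r : ℚ) ^ 2)
      = (∑ r ∈ n.divisors, (r : ℚ) * (ArithmeticFunction.moebius r : ℚ)
          * ((n / r : ℕ) : ℚ) ^ 3)
        - ∑ r ∈ n.divisors, (ArithmeticFunction.moebius r : ℚ) * ((n / r : ℕ) : ℚ) ^ 2 := by
    rw [← Finset.sum_sub_distrib]
    rw [show ((n : ℚ) ^ 2 * ((n : ℚ) - 1)) / 8 *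
        ∑ r ∈ n.divisors, (ArithmeticFunction.moebius r : ℚ) / (r : ℚ) ^ 2
      = ∑ r ∈ n.divisors, ((n : ℚ) ^ 2 * ((n : ℚ) - 1)) / 8
          * ((ArithmeticFunction.moebius r : ℚ) / (r : ℚ) ^ 2) from by rw [Finset.mul_sum],
      Finset.mul_sum]
    apply Finset.sum_congr rfl
    intro r hr
    obtain ⟨hrn, -⟩ := Nat.mem_divisors.mp hr
    have hr0 : 0 < r := Nat.pos_of_dvd_of_pos hrn hn0
    have hrq : ((n / r : ℕ) : ℚ) = (n : ℚ) / (r : ℚ) := by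
      rw [Nat.cast_div hrn (by exact_mod_cast hr0.ne')]
    rw [hrq]
    have hr0' : (r : ℚ) ≠ 0 := by exact_mod_cast hr0.ne'
    field_simp
  have h8 : (8 : ℚ) ≠ 0 := by norm_num
  apply mul_left_cancel₀ h8
  rw [hLHS, hRHS]
end

section
/- Let n ≥ 1 be an integer. For each positive divisor r of n let γ_{1,2}(n,r) = (1/2)·Σ_{d ∣ (n/r)} μ(d) · Σ u², the inner sum ranging over triples (i_1, i_2, u) of positive integers with (i_1 + i_2)·u = n/(r·d). Then Σ_{r ∣ n} r·μ(r)·γ_{1,2}(n,r) = (n²/2)·Σ_{r ∣ n} μ(r)/r² − (n/2)·φ(n). -/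
/-- `∑ u²` over triples `(i₁, i₂, u)` of positive integers with `(i₁ + i₂)·u = m`. -/
def tripleSum (m : ℕ) : ℕ :=
  ∑ p ∈ (Finset.Ioc 0 m ×ˢ Finset.Ioc 0 m ×ˢ Finset.Ioc 0 m).filter
      (fun p => (p.1 + p.2.1) * p.2.2 = m),
    p.2.2 ^ 2

/-- `gamma12 n r = (1/2)·∑_{d ∣ n/r} μ(d)·∑_{(i₁+i₂)·u = n/(r·d)} u²`. -/
def gamma12 (n r : ℕ) : ℚ :=
  (1 / 2) * ∑ d ∈ (n / r).divisors,
    (ArithmeticFunction.moebius d : ℚ) * (tripleSum (n / (r * d)) : ℚ)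

open Finset ArithmeticFunction

lemma tripleSum_eq (m : ℕ) :
    tripleSum m = ∑ p ∈ Nat.divisorsAntidiagonal m, (p.1 - 1) * p.2 ^ 2 := by
  have h1 : ∀ p ∈ Nat.divisorsAntidiagonal m,
      (p.1 - 1) * p.2 ^ 2 = ∑ _i ∈ Finset.Ioo 0 p.1, p.2 ^ 2 := by
    intro p _
    rw [Finset.sum_const, Nat.card_Ioo, smul_eq_mul, Nat.sub_zero]
  rw [Finset.sum_congr rfl h1, Finset.sum_sigma', tripleSum]
  symm
  refine Finset.sum_bij' (fun x _ => ((x.2, x.1.1 - x.2, x.1.2) : ℕ × ℕ × ℕ))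
    (fun p _ => (⟨(p.1 + p.2.1, p.2.2), p.1⟩ : (_ : ℕ × ℕ) × ℕ)) ?_ ?_ ?_ ?_ ?_
  · intro x hx
    simp only [Finset.mem_sigma, Nat.mem_divisorsAntidiagonal, Finset.mem_Ioo] at hx
    obtain ⟨⟨hsu, hm⟩, hi0, his⟩ := hx
    have hu : 0 < x.1.2 := by
      rcases Nat.eq_zero_or_pos x.1.2 with h | h
      · exact absurd (by rw [← hsu, h, mul_zero]) hm
      · exact h
    have hsle : x.1.1 ≤ m := Nat.le_of_dvd (Nat.pos_of_ne_zero hm) ⟨x.1.2, hsu.symm⟩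
    have hule : x.1.2 ≤ m := Nat.le_of_dvd (Nat.pos_of_ne_zero hm) ⟨x.1.1, by rw [← hsu, mul_comm]⟩
    simp only [Finset.mem_filter, Finset.mem_product, Finset.mem_Ioc]
    exact ⟨⟨⟨hi0, by omega⟩, ⟨by omega, by omega⟩, hu, hule⟩, by
      show (x.2 + (x.1.1 - x.2)) * x.1.2 = m
      rw [Nat.add_sub_cancel' (le_of_lt his), hsu]⟩
  · intro p hp
    simp only [Finset.mem_filter, Finset.mem_product, Finset.mem_Ioc] at hp
    obtain ⟨⟨⟨h10, h1m⟩, ⟨h20, h2m⟩, h30, h3m⟩, heq⟩ := hp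
    simp only [Finset.mem_sigma, Nat.mem_divisorsAntidiagonal, Finset.mem_Ioo]
    exact ⟨⟨heq, by omega⟩, h10, by omega⟩
  · intro x hx
    simp only [Finset.mem_sigma, Nat.mem_divisorsAntidiagonal, Finset.mem_Ioo] at hx
    obtain ⟨⟨hsu, hm⟩, hi0, his⟩ := hx
    ext <;> simp [Nat.add_sub_cancel' (le_of_lt his)]
  · intro p hp
    simp
  · intro x hx
    simp


noncomputable def Aq : ArithmeticFunction ℚ := ⟨fun r => (r : ℚ) * (moebius r : ℚ), by simp⟩
def Bq : ArithmeticFunction ℚ := ⟨fun u => (u : ℚ) ^ 2, by simp⟩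
def Idq : ArithmeticFunction ℚ := ⟨fun n => (n : ℚ), by simp⟩
def phiq : ArithmeticFunction ℚ := ⟨fun n => (Nat.totient n : ℚ), by simp⟩
noncomputable def muq : ArithmeticFunction ℚ :=
  ((moebius : ArithmeticFunction ℤ) : ArithmeticFunction ℚ)
def zetaq : ArithmeticFunction ℚ := ((ArithmeticFunction.zeta : ArithmeticFunction ℕ) : ArithmeticFunction ℚ)

@[simp] lemma Aq_apply (r : ℕ) : Aq r = (r : ℚ) * (moebius r : ℚ) := rfl
@[simp] lemma Bq_apply (u : ℕ) : Bq u = (u : ℚ) ^ 2 := rfl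
@[simp] lemma Idq_apply (n : ℕ) : Idq n = (n : ℚ) := rfl
@[simp] lemma phiq_apply (n : ℕ) : phiq n = (Nat.totient n : ℚ) := rfl
@[simp] lemma muq_apply (n : ℕ) : muq n = (moebius n : ℚ) := by
  simp [muq, ArithmeticFunction.intCoe_apply]
lemma zetaq_apply_ne {n : ℕ} (h : n ≠ 0) : zetaq n = 1 := by
  simp [zetaq, ArithmeticFunction.natCoe_apply, ArithmeticFunction.zeta_apply, h]

lemma AF_sub_apply (f g : ArithmeticFunction ℚ) (n : ℕ) : (f - g) n = f n - g n := by
  rw [sub_eq_add_neg, ArithmeticFunction.add_apply, sub_eq_add_neg]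
  rfl

lemma F2 : muq * zetaq = 1 := coe_moebius_mul_coe_zeta

lemma F1 : zetaq * phiq = Idq := by
  ext n
  rw [zetaq, coe_zeta_mul_apply, Idq_apply]
  simp only [phiq_apply]
  rw [← Nat.cast_sum, Nat.sum_totient]

lemma F3 : muq * Idq = phiq := by
  have := congrArg (fun f => muq * f) F1.symm
  simpa [← mul_assoc, F2] using this

lemma F4 : Aq * Idq = 1 := by
  ext n
  rw [ArithmeticFunction.mul_apply]
  have h : ∀ p ∈ Nat.divisorsAntidiagonal n, Aq p.1 * Idq p.2 = (n : ℚ) * (muq p.1 * zetaq p.2) := by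
    intro p hp
    obtain ⟨hmul, hn⟩ := Nat.mem_divisorsAntidiagonal.mp hp
    have h2 : p.2 ≠ 0 := by intro h; rw [h, mul_zero] at hmul; exact hn hmul.symm
    rw [Aq_apply, Idq_apply, muq_apply, zetaq_apply_ne h2]
    push_cast [← hmul]
    ring
  rw [Finset.sum_congr rfl h, ← Finset.mul_sum, ← ArithmeticFunction.mul_apply, F2]
  rcases eq_or_ne n 1 with rfl | hn
  · simp
  · simp [ArithmeticFunction.one_apply, hn]

lemma F5 (n : ℕ) : (Aq * Bq) n = (n : ℚ) * (Nat.totient n : ℚ) := by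
  rw [ArithmeticFunction.mul_apply]
  have h : ∀ p ∈ Nat.divisorsAntidiagonal n, Aq p.1 * Bq p.2 = (n : ℚ) * (muq p.1 * Idq p.2) := by
    intro p hp
    obtain ⟨hmul, hn⟩ := Nat.mem_divisorsAntidiagonal.mp hp
    rw [Aq_apply, Bq_apply, muq_apply, Idq_apply]
    push_cast [← hmul]
    ring
  rw [Finset.sum_congr rfl h, ← Finset.mul_sum, ← ArithmeticFunction.mul_apply, F3, phiq_apply]

lemma tripleSum_cast (m : ℕ) : (tripleSum m : ℚ) = ((Idq - zetaq) * Bq) m := by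
  rw [tripleSum_eq, ArithmeticFunction.mul_apply, Nat.cast_sum]
  refine Finset.sum_congr rfl fun p hp => ?_
  obtain ⟨hmul, hn⟩ := Nat.mem_divisorsAntidiagonal.mp hp
  have h1 : p.1 ≠ 0 := by intro h; rw [h, zero_mul] at hmul; exact hn hmul.symm
  rw [AF_sub_apply, Idq_apply, Bq_apply, zetaq_apply_ne h1]
  push_cast [Nat.cast_sub (Nat.one_le_iff_ne_zero.mpr h1)]
  ring

lemma gamma12_eq (n r : ℕ) :
    gamma12 n r = (1 / 2) * ((muq * ((Idq - zetaq) * Bq)) (n / r)) := by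
  rw [gamma12, ArithmeticFunction.mul_apply,
    Nat.sum_divisorsAntidiagonal (fun a b => muq a * ((Idq - zetaq) * Bq) b)]
  congr 1
  refine Finset.sum_congr rfl fun d hd => ?_
  rw [muq_apply, ← tripleSum_cast, Nat.div_div_eq_div_mul]
theorem stmt16 (n : ℕ) (hn : 1 ≤ n) :
    ∑ r ∈ n.divisors, (r : ℚ) * (ArithmeticFunction.moebius r : ℚ) * gamma12 n r =
      (n : ℚ) ^ 2 / 2 *
          ∑ r ∈ n.divisors, (ArithmeticFunction.moebius r : ℚ) / (r : ℚ) ^ 2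
        - (n : ℚ) / 2 * (Nat.totient n : ℚ) := by
  have hLHS : ∑ r ∈ n.divisors, (r : ℚ) * (ArithmeticFunction.moebius r : ℚ) * gamma12 n r
      = (1 / 2) * ((Aq * (muq * ((Idq - zetaq) * Bq))) n) := by
    rw [ArithmeticFunction.mul_apply,
      Nat.sum_divisorsAntidiagonal (fun a b => Aq a * (muq * ((Idq - zetaq) * Bq)) b),
      Finset.mul_sum]
    refine Finset.sum_congr rfl fun r hr => ?_
    rw [gamma12_eq, Aq_apply]
    ring
  have key : Aq * (muq * ((Idq - zetaq) * Bq))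
      = Aq * Idq * (muq * Bq) - muq * zetaq * (Aq * Bq) := by ring
  have hmb : (muq * Bq) n = (n : ℚ) ^ 2 * ∑ r ∈ n.divisors,
      (ArithmeticFunction.moebius r : ℚ) / (r : ℚ) ^ 2 := by
    rw [ArithmeticFunction.mul_apply,
      Nat.sum_divisorsAntidiagonal (fun a b => muq a * Bq b), Finset.mul_sum]
    refine Finset.sum_congr rfl fun r hr => ?_
    obtain ⟨hdvd, hn0⟩ := Nat.mem_divisors.mp hr
    have hr0 : (r : ℚ) ≠ 0 := Nat.cast_ne_zero.mpr fun h => hn0 (by simpa [h] using hdvd)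
    rw [muq_apply, Bq_apply, Nat.cast_div hdvd hr0]
    field_simp
  rw [hLHS, key, AF_sub_apply, F4, F2, one_mul, one_mul, F5, hmb]
  ring
end

section
/- Let n ≥ 2 be an integer. For each positive divisor r of n let γ_{1,1}(n,r) = (1/2)·Σ_{d ∣ (n/r)} μ(d)·S_1(n/(r·d)), where S_1(m) = Σ_{(a,b) ∈ ℤ_{>0}², a + b = m} σ_1(a)·σ_1(b). Then Σ_{r ∣ n} r·μ(r)·γ_{1,1}(n,r) = ((5/24)·n³ − (1/4)·n²)·Σ_{r ∣ n} μ(r)/r². -/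
/-- `gamma11 n r = (1/2)·∑_{d ∣ n/r} μ(d)·S₁(n/(r·d))`. -/
def gamma11 (n r : ℕ) : ℚ :=
  (1 / 2) * ∑ d ∈ (n / r).divisors,
    (ArithmeticFunction.moebius d : ℚ) * (Spair 1 (n / (r * d)) : ℚ)

open Finset

abbrev V := (ℕ × ℕ) × ℕ × ℕ

def Qs (n : ℕ) : Finset V :=
  (((Finset.Ioc 0 n) ×ˢ (Finset.Ioc 0 n)) ×ˢ ((Finset.Ioc 0 n) ×ˢ (Finset.Ioc 0 n))).filter
    fun p => p.1.1 * p.2.1 + p.1.2 * p.2.2 = n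

lemma mem_Qs {n : ℕ} {p : V} : p ∈ Qs n ↔
    0 < p.1.1 ∧ 0 < p.1.2 ∧ 0 < p.2.1 ∧ 0 < p.2.2 ∧ p.1.1 * p.2.1 + p.1.2 * p.2.2 = n := by
  obtain ⟨⟨a,b⟩,x,y⟩ := p
  simp only [Qs, Finset.mem_filter, Finset.mem_product, Finset.mem_Ioc]
  constructor
  · rintro ⟨⟨⟨⟨ha,-⟩,⟨hb,-⟩⟩,⟨hx,-⟩,⟨hy,-⟩⟩, hc⟩; exact ⟨ha,hb,hx,hy,hc⟩
  · rintro ⟨ha,hb,hx,hy,hc⟩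
    have h1 : a ≤ a * x := Nat.le_mul_of_pos_right a hx
    have h2 : b ≤ b * y := Nat.le_mul_of_pos_right b hy
    have h3 : x ≤ a * x := Nat.le_mul_of_pos_left x ha
    have h4 : y ≤ b * y := Nat.le_mul_of_pos_left y hb
    exact ⟨⟨⟨⟨ha, by omega⟩, hb, by omega⟩, ⟨hx, by omega⟩, hy, by omega⟩, hc⟩

def Rs (n : ℕ) : Finset V := (Qs n).filter fun p => p.1.2 < p.1.1
def Ds (n : ℕ) : Finset V := (Qs n).filter fun p => p.1.1 = p.1.2

lemma mem_Qs' {n a b x y : ℕ} : ((a,b),(x,y)) ∈ Qs n ↔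
    0 < a ∧ 0 < b ∧ 0 < x ∧ 0 < y ∧ a * x + b * y = n := mem_Qs

lemma mem_Rs {n : ℕ} {p : V} : p ∈ Rs n ↔
    0 < p.1.1 ∧ 0 < p.1.2 ∧ 0 < p.2.1 ∧ 0 < p.2.2 ∧ p.1.1 * p.2.1 + p.1.2 * p.2.2 = n
      ∧ p.1.2 < p.1.1 := by
  rw [Rs, Finset.mem_filter, mem_Qs]; tauto

lemma mem_Rs' {n a b x y : ℕ} : ((a,b),(x,y)) ∈ Rs n ↔
    0 < a ∧ 0 < b ∧ 0 < x ∧ 0 < y ∧ a * x + b * y = n ∧ b < a := mem_Rs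

def hmap (p : V) : V := ((p.2.1 + p.2.2, p.2.1), (p.1.2, p.1.1 - p.1.2))

lemma hmap_mem {n : ℕ} {p : V} (hp : p ∈ Rs n) : hmap p ∈ Rs n := by
  obtain ⟨⟨a,b⟩,x,y⟩ := p
  rw [mem_Rs'] at hp
  obtain ⟨ha,hb,hx,hy,hc,hba⟩ := hp
  simp only [hmap]
  rw [mem_Rs']
  refine ⟨by omega, by omega, by omega, by omega, ?_, by omega⟩
  have key : (x + y) * b + x * (a - b) = a * x + b * y := by
    have hab : b ≤ a := le_of_lt hba
    obtain ⟨c, rfl⟩ : ∃ c, a = b + c := ⟨a - b, by omega⟩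
    rw [Nat.add_sub_cancel_left]
    ring
  rw [key, hc]

lemma hmap_invol {p : V} (hba : p.1.2 < p.1.1) : hmap (hmap p) = p := by
  obtain ⟨⟨a,b⟩,x,y⟩ := p
  have hba' : b < a := hba
  simp only [hmap]
  have h1 : b + (a - b) = a := by omega
  have h2 : x + y - x = y := by omega
  rw [h1, h2]

lemma sum_h {M : Type*} [AddCommMonoid M] (n : ℕ) (f : V → M) :
    ∑ p ∈ Rs n, f p = ∑ p ∈ Rs n, f (hmap p) := by
  refine Finset.sum_nbij' hmap hmap (fun p hp => hmap_mem hp) (fun p hp => hmap_mem hp)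
    ?_ ?_ ?_
  · intro p hp; exact hmap_invol (mem_Rs.mp hp).2.2.2.2.2
  · intro p hp; exact hmap_invol (mem_Rs.mp hp).2.2.2.2.2
  · intro p hp
    rw [hmap_invol (mem_Rs.mp hp).2.2.2.2.2]

lemma sum_sig2 {M : Type*} [AddCommMonoid M] (n : ℕ) (f : V → M) :
    ∑ p ∈ Qs n, f p = ∑ p ∈ Qs n, f (p.2, p.1) := by
  refine Finset.sum_nbij' (fun p => (p.2, p.1)) (fun p => (p.2, p.1)) ?_ ?_ ?_ ?_ ?_
  · rintro ⟨⟨a,b⟩,x,y⟩ hp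
    rw [mem_Qs'] at hp ⊢
    obtain ⟨ha,hb,hx,hy,hc⟩ := hp
    exact ⟨hx, hy, ha, hb, by rw [← hc]; ring⟩
  · rintro ⟨⟨a,b⟩,x,y⟩ hp
    rw [mem_Qs'] at hp ⊢
    obtain ⟨ha,hb,hx,hy,hc⟩ := hp
    exact ⟨hx, hy, ha, hb, by rw [← hc]; ring⟩
  · rintro ⟨⟨a,b⟩,x,y⟩ _; rfl
  · rintro ⟨⟨a,b⟩,x,y⟩ _; rfl
  · rintro ⟨⟨a,b⟩,x,y⟩ _; rfl

def s1map (p : V) : V := ((p.1.2, p.1.1), (p.2.2, p.2.1))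

lemma sum_split {M : Type*} [AddCommMonoid M] (n : ℕ) (f : V → M) :
    ∑ p ∈ Qs n, f p = ∑ p ∈ Rs n, f p + ∑ p ∈ Rs n, f (s1map p) + ∑ p ∈ Ds n, f p := by
  classical
  rw [← Finset.sum_filter_add_sum_filter_not (Qs n) (fun p => p.1.2 < p.1.1) f]
  have h2 : ∑ p ∈ (Qs n).filter (fun p => ¬ p.1.2 < p.1.1), f p
      = ∑ p ∈ (Qs n).filter (fun p => p.1.1 < p.1.2), f p + ∑ p ∈ Ds n, f p := by
    rw [← Finset.sum_filter_add_sum_filter_not ((Qs n).filter (fun p => ¬ p.1.2 < p.1.1))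
      (fun p => p.1.1 < p.1.2) f]
    congr 1
    · congr 1
      rw [Finset.filter_filter]
      apply Finset.filter_congr
      intro p _
      constructor
      · rintro ⟨-, h⟩; exact h
      · intro h; exact ⟨by omega, h⟩
    · rw [Finset.filter_filter]
      apply Finset.sum_congr _ (fun _ _ => rfl)
      apply Finset.filter_congr
      intro p _
      simp only [not_lt]
      constructor
      · rintro ⟨h1, h2⟩; omega
      · intro h; omega
  rw [h2]
  have h3 : ∑ p ∈ (Qs n).filter (fun p => p.1.1 < p.1.2), f p = ∑ p ∈ Rs n, f (s1map p) := by
    refine Finset.sum_nbij' s1map s1map ?_ ?_ ?_ ?_ ?_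
    · rintro ⟨⟨a,b⟩,x,y⟩ hp
      rw [Finset.mem_filter] at hp
      rw [mem_Qs'] at hp
      simp only [s1map]
      rw [mem_Rs']
      obtain ⟨⟨ha,hb,hx,hy,hc⟩,hab⟩ := hp
      exact ⟨hb, ha, hy, hx, by rw [← hc]; ring, hab⟩
    · rintro ⟨⟨a,b⟩,x,y⟩ hp
      rw [mem_Rs'] at hp
      simp only [s1map]
      rw [Finset.mem_filter]
      constructor
      · rw [mem_Qs']
        obtain ⟨ha,hb,hx,hy,hc,hba⟩ := hp
        exact ⟨hb, ha, hy, hx, by rw [← hc]; ring⟩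
      · exact hp.2.2.2.2.2
    · rintro ⟨⟨a,b⟩,x,y⟩ _; rfl
    · rintro ⟨⟨a,b⟩,x,y⟩ _; rfl
    · rintro ⟨⟨a,b⟩,x,y⟩ _; rfl
  rw [h3]
  have hR : (Qs n).filter (fun p : V => p.1.2 < p.1.1) = Rs n := rfl
  rw [hR]
  abel

lemma sum_diag {M : Type*} [AddCommMonoid M] (n : ℕ) (f : V → M) :
    ∑ p ∈ Ds n, f p
      = ∑ d ∈ n.divisors, ∑ x ∈ Finset.Ioo 0 (n/d), f ((d,d),(x, n/d - x)) := by
  rw [Finset.sum_sigma' n.divisors (fun d => Finset.Ioo 0 (n/d))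
    (fun d x => f ((d,d),(x, n/d - x)))]
  refine Finset.sum_nbij' (fun p => (⟨p.1.1, p.2.1⟩ : (_ : ℕ) × ℕ))
    (fun q => ((q.1, q.1), (q.2, n / q.1 - q.2))) ?_ ?_ ?_ ?_ ?_
  · rintro ⟨⟨a,b⟩,x,y⟩ hp
    rw [Ds, Finset.mem_filter] at hp
    obtain ⟨hq, hab⟩ := hp
    rw [mem_Qs'] at hq
    obtain ⟨ha,hb,hx,hy,hc⟩ := hq
    have hab' : a = b := hab
    subst hab'
    have hsum : a * (x + y) = n := by rw [← hc]; ring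
    have hdvd : a ∣ n := ⟨x + y, hsum.symm⟩
    have hdiv : n / a = x + y := by rw [← hsum, Nat.mul_div_cancel_left _ ha]
    have hn0 : n ≠ 0 := by
      have : 0 < a * (x + y) := Nat.mul_pos ha (by omega)
      omega
    show (⟨a, x⟩ : (_ : ℕ) × ℕ) ∈ n.divisors.sigma (fun d => Finset.Ioo 0 (n/d))
    refine Finset.mem_sigma.mpr ⟨?_, ?_⟩
    · show a ∈ n.divisors
      exact Nat.mem_divisors.mpr ⟨hdvd, hn0⟩
    · show x ∈ Finset.Ioo 0 (n / a)
      rw [hdiv]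
      exact Finset.mem_Ioo.mpr ⟨hx, by omega⟩
  · rintro ⟨d, x⟩ hq
    simp only [Finset.mem_sigma, Nat.mem_divisors, Finset.mem_Ioo] at hq
    obtain ⟨⟨hdvd, hn0⟩, hx0, hxs⟩ := hq
    show ((d, d), (x, n / d - x)) ∈ Ds n
    rw [Ds, Finset.mem_filter]
    constructor
    · rw [mem_Qs']
      have hd0 : 0 < d := Nat.pos_of_dvd_of_pos hdvd (Nat.pos_of_ne_zero hn0)
      refine ⟨hd0, hd0, hx0, by omega, ?_⟩
      have hxx : x + (n / d - x) = n / d := by omega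
      calc d * x + d * (n / d - x) = d * (x + (n / d - x)) := by ring
        _ = d * (n / d) := by rw [hxx]
        _ = n := Nat.mul_div_cancel' hdvd
    · rfl
  · rintro ⟨⟨a,b⟩,x,y⟩ hp
    rw [Ds, Finset.mem_filter] at hp
    obtain ⟨hq, hab⟩ := hp
    rw [mem_Qs'] at hq
    obtain ⟨ha,hb,hx,hy,hc⟩ := hq
    have hab' : a = b := hab
    subst hab'
    have hsum : a * (x + y) = n := by rw [← hc]; ring
    have hdiv : n / a = x + y := by rw [← hsum, Nat.mul_div_cancel_left _ ha]
    have hyy : n / a - x = y := by rw [hdiv]; omega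
    show ((a, a), (x, n / a - x)) = ((a,a), (x, y))
    rw [hyy]
  · rintro ⟨d, x⟩ _
    rfl
  · rintro ⟨⟨a,b⟩,x,y⟩ hp
    rw [Ds, Finset.mem_filter] at hp
    obtain ⟨hq, hab⟩ := hp
    rw [mem_Qs'] at hq
    obtain ⟨ha,hb,hx,hy,hc⟩ := hq
    have hab' : a = b := hab
    subst hab'
    have hsum : a * (x + y) = n := by rw [← hc]; ring
    have hdiv : n / a = x + y := by rw [← hsum, Nat.mul_div_cancel_left _ ha]
    have hyy : n / a - x = y := by rw [hdiv]; omega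
    show f ((a,a),(x,y)) = f ((a, a), (x, n / a - x))
    rw [hyy]

-- power sum closed forms over Ioo
lemma sum_Ioo_const (s : ℕ) (hs : s ≠ 0) (c : ℤ) :
    ∑ _x ∈ Finset.Ioo 0 s, c = ((s:ℤ) - 1) * c := by
  obtain ⟨m, rfl⟩ : ∃ m, s = m + 1 := ⟨s - 1, by omega⟩
  rw [Finset.sum_const, Nat.card_Ioo, nsmul_eq_mul]
  push_cast
  ring

lemma sum_range_id' (s : ℕ) : 2 * ∑ x ∈ Finset.range s, (x:ℤ) = s * (s - 1) := by
  induction s with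
  | zero => simp
  | succ m ih =>
    rw [Finset.sum_range_succ]
    push_cast
    push_cast at ih
    linarith

lemma sum_range_sq' (s : ℕ) : 6 * ∑ x ∈ Finset.range s, (x:ℤ)^2 = s * (s - 1) * (2*s - 1) := by
  induction s with
  | zero => simp
  | succ m ih =>
    rw [Finset.sum_range_succ]
    push_cast
    push_cast at ih
    nlinarith [ih]

lemma Ioo_eq_range {M : Type*} [AddCommMonoid M] (s : ℕ) (g : ℕ → M) (hg : g 0 = 0) :
    ∑ x ∈ Finset.Ioo 0 s, g x = ∑ x ∈ Finset.range s, g x := by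
  cases s with
  | zero => simp
  | succ m =>
    have hset : Finset.Ioo 0 (m+1) = Finset.Ico 1 (m+1) := by
      ext z; simp [Finset.mem_Ioo, Finset.mem_Ico]; omega
    rw [hset, Finset.range_eq_Ico, Finset.sum_eq_sum_Ico_succ_bot (Nat.succ_pos m), hg, zero_add]

lemma sigma1_antidiag (m : ℕ) : sigma' 1 m = ∑ i ∈ m.divisorsAntidiagonal, i.1 := by
  rw [sigma']
  rw [show (∑ i ∈ m.divisorsAntidiagonal, i.1)
    = ∑ i ∈ m.divisorsAntidiagonal, (fun u (_ : ℕ) => u) i.1 i.2 from rfl]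
  rw [Nat.sum_divisorsAntidiagonal (fun u (_ : ℕ) => u)]
  simp [pow_one]

lemma spair_eq (n : ℕ) : Spair 1 n = ∑ p ∈ Qs n, p.1.1 * p.1.2 := by
  rw [Spair]
  have hterm : ∀ q ∈ ((Finset.Ioc 0 n) ×ˢ (Finset.Ioc 0 n)).filter (fun p => 1 * p.1 + p.2 = n),
      sigma' 1 q.1 * sigma' 1 q.2
        = ∑ r ∈ q.1.divisorsAntidiagonal ×ˢ q.2.divisorsAntidiagonal, r.1.1 * r.2.1 := by
    intro q _
    rw [sigma1_antidiag, sigma1_antidiag, Finset.sum_mul_sum]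
    rw [Finset.sum_product]
  rw [Finset.sum_congr rfl hterm]
  rw [Finset.sum_sigma' (((Finset.Ioc 0 n) ×ˢ (Finset.Ioc 0 n)).filter (fun p => 1 * p.1 + p.2 = n))
    (fun q => q.1.divisorsAntidiagonal ×ˢ q.2.divisorsAntidiagonal)
    (fun _ r => r.1.1 * r.2.1)]
  refine Finset.sum_nbij'
    (fun q => ((q.2.1.1, q.2.2.1), (q.2.1.2, q.2.2.2)))
    (fun p => ⟨(p.1.1 * p.2.1, p.1.2 * p.2.2), ((p.1.1, p.2.1), (p.1.2, p.2.2))⟩)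
    ?_ ?_ ?_ ?_ ?_
  · rintro ⟨⟨a,b⟩,⟨u,x⟩,v,y⟩ hq
    simp only [Finset.mem_sigma, Finset.mem_filter, Finset.mem_product, Finset.mem_Ioc,
      Nat.mem_divisorsAntidiagonal] at hq
    obtain ⟨⟨⟨⟨ha0,han⟩,hb0,hbn⟩,hab⟩, ⟨hux, ha'⟩, hvy, hb'⟩ := hq
    rw [mem_Qs']
    refine ⟨?_, ?_, ?_, ?_, ?_⟩
    · rcases Nat.eq_zero_or_pos u with h | h
      · subst h; rw [Nat.zero_mul] at hux; omega
      · exact h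
    · rcases Nat.eq_zero_or_pos v with h | h
      · subst h; rw [Nat.zero_mul] at hvy; omega
      · exact h
    · rcases Nat.eq_zero_or_pos x with h | h
      · subst h; rw [Nat.mul_zero] at hux; omega
      · exact h
    · rcases Nat.eq_zero_or_pos y with h | h
      · subst h; rw [Nat.mul_zero] at hvy; omega
      · exact h
    · rw [hux, hvy]; omega
  · rintro ⟨⟨u,v⟩,x,y⟩ hp
    rw [mem_Qs'] at hp
    obtain ⟨hu,hv,hx,hy,hc⟩ := hp
    have hux : 0 < u * x := Nat.mul_pos hu hx
    have hvy : 0 < v * y := Nat.mul_pos hv hy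
    refine Finset.mem_sigma.mpr ⟨?_, ?_⟩
    · show (u * x, v * y) ∈ Finset.filter _ _
      refine Finset.mem_filter.mpr ⟨Finset.mem_product.mpr
        ⟨Finset.mem_Ioc.mpr ⟨hux, by omega⟩, Finset.mem_Ioc.mpr ⟨hvy, by omega⟩⟩, ?_⟩
      show 1 * (u * x) + v * y = n
      omega
    · show ((u, x), (v, y)) ∈ _ ×ˢ _
      exact Finset.mem_product.mpr
        ⟨Nat.mem_divisorsAntidiagonal.mpr ⟨rfl, Nat.pos_iff_ne_zero.mp hux⟩,
         Nat.mem_divisorsAntidiagonal.mpr ⟨rfl, Nat.pos_iff_ne_zero.mp hvy⟩⟩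
  · rintro ⟨⟨a,b⟩,⟨u,x⟩,v,y⟩ hq
    simp only [Finset.mem_sigma, Finset.mem_filter, Finset.mem_product, Finset.mem_Ioc,
      Nat.mem_divisorsAntidiagonal] at hq
    obtain ⟨-, ⟨hux, -⟩, hvy, -⟩ := hq
    subst hux; subst hvy; rfl
  · rintro ⟨⟨u,v⟩,x,y⟩ _; rfl
  · rintro ⟨⟨a,b⟩,⟨u,x⟩,v,y⟩ _; rfl

lemma sum_Ioo_reflect {M : Type*} [AddCommMonoid M] (s : ℕ) (g : ℕ → M) :
    ∑ x ∈ Finset.Ioo 0 s, g (s - x) = ∑ x ∈ Finset.Ioo 0 s, g x := by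
  refine Finset.sum_nbij' (fun x => s - x) (fun x => s - x) ?_ ?_ ?_ ?_ ?_ <;>
    intro a ha <;> simp only [Finset.mem_Ioo] at * <;> omega

lemma besge_int (n : ℕ) (hn : 1 ≤ n) :
    12 * (Spair 1 n : ℤ)
      = 5 * (sigma' 3 n : ℤ) + (sigma' 1 n : ℤ) - 6 * n * (sigma' 1 n : ℤ) := by
  -- the five certificate equations
  have e1 : ∑ p ∈ Rs n, (p.2.2:ℤ)^2
      = ∑ p ∈ Rs n, (p.1.1:ℤ)^2 - 2 * ∑ p ∈ Rs n, ((p.1.1:ℤ) * (p.1.2:ℤ))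
        + ∑ p ∈ Rs n, (p.1.2:ℤ)^2 := by
    rw [sum_h n (fun p => (p.2.2:ℤ)^2)]
    have step : ∀ p ∈ Rs n, (((hmap p).2.2 : ℕ):ℤ)^2
        = (p.1.1:ℤ)^2 - 2*((p.1.1:ℤ) * (p.1.2:ℤ)) + (p.1.2:ℤ)^2 := by
      rintro ⟨⟨a,b⟩,x,y⟩ hp
      have hba : b < a := (mem_Rs'.mp hp).2.2.2.2.2
      show ((a - b : ℕ):ℤ)^2 = _
      rw [Nat.cast_sub (le_of_lt hba)]
      push_cast
      ring
    rw [Finset.sum_congr rfl step, Finset.sum_add_distrib, Finset.sum_sub_distrib,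
      ← Finset.mul_sum]
  have e3 : ∑ p ∈ Rs n, ((p.2.1:ℤ) * (p.2.2:ℤ))
      = ∑ p ∈ Rs n, ((p.1.1:ℤ) * (p.1.2:ℤ)) - ∑ p ∈ Rs n, (p.1.2:ℤ)^2 := by
    rw [sum_h n (fun p => ((p.2.1:ℤ) * (p.2.2:ℤ)))]
    have step : ∀ p ∈ Rs n, (((hmap p).2.1 : ℕ):ℤ) * (((hmap p).2.2 : ℕ):ℤ)
        = (p.1.1:ℤ) * (p.1.2:ℤ) - (p.1.2:ℤ)^2 := by
      rintro ⟨⟨a,b⟩,x,y⟩ hp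
      have hba : b < a := (mem_Rs'.mp hp).2.2.2.2.2
      show (b:ℤ) * ((a - b : ℕ):ℤ) = _
      rw [Nat.cast_sub (le_of_lt hba)]
      push_cast
      ring
    rw [Finset.sum_congr rfl step, Finset.sum_sub_distrib]
  have e5 : ∑ p ∈ Rs n, (p.2.1:ℤ)^2 = ∑ p ∈ Rs n, (p.1.2:ℤ)^2 := by
    rw [sum_h n (fun p => (p.2.1:ℤ)^2)]
    exact Finset.sum_congr rfl (fun p _ => rfl)
  -- sigma2-symmetry equations
  have e2 : ∑ p ∈ Rs n, (p.2.2:ℤ)^2 + ∑ p ∈ Rs n, (p.2.1:ℤ)^2 + ∑ p ∈ Ds n, (p.2.2:ℤ)^2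
      = ∑ p ∈ Rs n, (p.1.2:ℤ)^2 + ∑ p ∈ Rs n, (p.1.1:ℤ)^2 + ∑ p ∈ Ds n, (p.1.2:ℤ)^2 := by
    have hq : ∑ p ∈ Qs n, (p.2.2:ℤ)^2 = ∑ p ∈ Qs n, (p.1.2:ℤ)^2 :=
      sum_sig2 n (fun p => (p.2.2:ℤ)^2)
    rw [sum_split n (fun p => (p.2.2:ℤ)^2), sum_split n (fun p => (p.1.2:ℤ)^2)] at hq
    simpa only [s1map] using hq
  have e4 : ∑ p ∈ Rs n, ((p.1.1:ℤ) * (p.1.2:ℤ)) + ∑ p ∈ Rs n, ((p.1.1:ℤ) * (p.1.2:ℤ))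
        + ∑ p ∈ Ds n, ((p.1.1:ℤ) * (p.1.2:ℤ))
      = ∑ p ∈ Rs n, ((p.2.1:ℤ) * (p.2.2:ℤ)) + ∑ p ∈ Rs n, ((p.2.1:ℤ) * (p.2.2:ℤ))
        + ∑ p ∈ Ds n, ((p.2.1:ℤ) * (p.2.2:ℤ)) := by
    have hq : ∑ p ∈ Qs n, ((p.1.1:ℤ) * (p.1.2:ℤ)) = ∑ p ∈ Qs n, ((p.2.1:ℤ) * (p.2.2:ℤ)) :=
      (sum_sig2 n (fun p => ((p.1.1:ℤ) * (p.1.2:ℤ)))).symm ▸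
        (sum_sig2 n (fun p => ((p.1.1:ℤ) * (p.1.2:ℤ))))
    rw [sum_split n (fun p => ((p.1.1:ℤ) * (p.1.2:ℤ))),
      sum_split n (fun p => ((p.2.1:ℤ) * (p.2.2:ℤ)))] at hq
    simp only [s1map] at hq
    have c1 : ∑ p ∈ Rs n, ((p.1.2:ℤ) * (p.1.1:ℤ)) = ∑ p ∈ Rs n, ((p.1.1:ℤ) * (p.1.2:ℤ)) :=
      Finset.sum_congr rfl (fun p _ => mul_comm _ _)
    have c2 : ∑ p ∈ Rs n, ((p.2.2:ℤ) * (p.2.1:ℤ)) = ∑ p ∈ Rs n, ((p.2.1:ℤ) * (p.2.2:ℤ)) :=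
      Finset.sum_congr rfl (fun p _ => mul_comm _ _)
    rw [c1, c2] at hq
    linarith [hq]
  -- split of the full sum
  have tsplit : ∑ p ∈ Qs n, ((p.1.1:ℤ) * (p.1.2:ℤ))
      = ∑ p ∈ Rs n, ((p.1.1:ℤ) * (p.1.2:ℤ)) + ∑ p ∈ Rs n, ((p.1.1:ℤ) * (p.1.2:ℤ))
        + ∑ p ∈ Ds n, ((p.1.1:ℤ) * (p.1.2:ℤ)) := by
    rw [sum_split n (fun p => ((p.1.1:ℤ) * (p.1.2:ℤ)))]
    simp only [s1map]
    have c1 : ∑ p ∈ Rs n, ((p.1.2:ℤ) * (p.1.1:ℤ)) = ∑ p ∈ Rs n, ((p.1.1:ℤ) * (p.1.2:ℤ)) :=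
      Finset.sum_congr rfl (fun p _ => mul_comm _ _)
    rw [c1]
  have dab : ∑ p ∈ Ds n, ((p.1.1:ℤ) * (p.1.2:ℤ)) = ∑ p ∈ Ds n, (p.1.2:ℤ)^2 := by
    refine Finset.sum_congr rfl ?_
    rintro ⟨⟨a,b⟩,x,y⟩ hp
    have hab : a = b := (Finset.mem_filter.mp hp).2
    show (a:ℤ) * (b:ℤ) = (b:ℤ)^2
    rw [hab]; ring
  -- certificate combination
  have key : 2 * ∑ p ∈ Qs n, ((p.1.1:ℤ) * (p.1.2:ℤ))
      = 2 * ∑ p ∈ Ds n, (p.2.2:ℤ)^2 + ∑ p ∈ Ds n, ((p.2.1:ℤ) * (p.2.2:ℤ))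
        - ∑ p ∈ Ds n, (p.1.2:ℤ)^2 := by
    linarith [e1, e2, e3, e4, e5, tsplit, dab]
  -- evaluate diagonal sums
  have hDb2 : ∑ p ∈ Ds n, (p.1.2:ℤ)^2
      = ∑ d ∈ n.divisors, (((n/d : ℕ):ℤ) - 1) * (d:ℤ)^2 := by
    rw [sum_diag n (fun p => (p.1.2:ℤ)^2)]
    refine Finset.sum_congr rfl (fun d hd => ?_)
    have hs : n / d ≠ 0 := by
      rw [Nat.mem_divisors] at hd
      have hd0 : 0 < d := Nat.pos_of_dvd_of_pos hd.1 (by omega)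
      exact (Nat.div_pos (Nat.le_of_dvd (by omega) hd.1) hd0).ne'
    exact sum_Ioo_const (n/d) hs ((d:ℤ)^2)
  have hDy2 : 6 * ∑ p ∈ Ds n, (p.2.2:ℤ)^2
      = ∑ d ∈ n.divisors,
          ((n/d : ℕ):ℤ) * (((n/d : ℕ):ℤ) - 1) * (2 * ((n/d : ℕ):ℤ) - 1) := by
    rw [sum_diag n (fun p => (p.2.2:ℤ)^2), Finset.mul_sum]
    refine Finset.sum_congr rfl (fun d _ => ?_)
    have hrefl : ∑ x ∈ Finset.Ioo 0 (n/d), ((n/d - x : ℕ):ℤ)^2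
        = ∑ x ∈ Finset.Ioo 0 (n/d), (x:ℤ)^2 :=
      sum_Ioo_reflect (n/d) (fun z => (z:ℤ)^2)
    rw [hrefl, Ioo_eq_range (n/d) (fun z => (z:ℤ)^2) (by simp)]
    exact sum_range_sq' (n/d)
  have hDxy : 6 * ∑ p ∈ Ds n, ((p.2.1:ℤ) * (p.2.2:ℤ))
      = ∑ d ∈ n.divisors,
          ((n/d : ℕ):ℤ) * (((n/d : ℕ):ℤ) - 1) * (((n/d : ℕ):ℤ) + 1) := by
    rw [sum_diag n (fun p => ((p.2.1:ℤ) * (p.2.2:ℤ))), Finset.mul_sum]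
    refine Finset.sum_congr rfl (fun d _ => ?_)
    have hcast : ∀ x ∈ Finset.Ioo 0 (n/d), (x:ℤ) * ((n/d - x : ℕ):ℤ)
        = (x:ℤ) * ((n/d : ℕ):ℤ) - (x:ℤ)^2 := by
      intro x hx
      rw [Finset.mem_Ioo] at hx
      rw [Nat.cast_sub (le_of_lt hx.2)]
      ring
    rw [Finset.sum_congr rfl hcast, Finset.sum_sub_distrib]
    rw [Ioo_eq_range (n/d) (fun z => (z:ℤ) * ((n/d : ℕ):ℤ)) (by simp)]
    rw [Ioo_eq_range (n/d) (fun z => (z:ℤ)^2) (by simp)]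
    have h1 := sum_range_id' (n/d)
    have h2 := sum_range_sq' (n/d)
    have h3 : ∑ x ∈ Finset.range (n/d), (x:ℤ) * ((n/d : ℕ):ℤ)
        = (∑ x ∈ Finset.range (n/d), (x:ℤ)) * ((n/d : ℕ):ℤ) := by
      rw [Finset.sum_mul]
    rw [h3]
    nlinarith [h1, h2]
  -- divisor-sum bookkeeping
  have hs3 : ∑ d ∈ n.divisors, ((n/d : ℕ):ℤ)^3 = (sigma' 3 n : ℤ) := by
    rw [show (fun d => ((n/d : ℕ):ℤ)^3) = (fun d => ((fun m => ((m:ℕ):ℤ)^3) (n/d))) from rfl]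
    rw [Nat.sum_div_divisors n (fun m => ((m:ℕ):ℤ)^3), sigma']
    push_cast
    rfl
  have hs2 : ∑ d ∈ n.divisors, ((n/d : ℕ):ℤ)^2 = ∑ d ∈ n.divisors, (d:ℤ)^2 := by
    rw [Nat.sum_div_divisors n (fun m => ((m:ℕ):ℤ)^2)]
  have hs1 : ∑ d ∈ n.divisors, ((n/d : ℕ):ℤ) = (sigma' 1 n : ℤ) := by
    rw [Nat.sum_div_divisors n (fun m => ((m:ℕ):ℤ)), sigma']
    push_cast
    simp [pow_one]
  have hsd : ∑ d ∈ n.divisors, ((n/d : ℕ):ℤ) * (d:ℤ)^2 = n * (sigma' 1 n : ℤ) := by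
    have step : ∀ d ∈ n.divisors, ((n/d : ℕ):ℤ) * (d:ℤ)^2 = (n:ℤ) * (d:ℤ) := by
      intro d hd
      rw [Nat.mem_divisors] at hd
      have : (d * (n / d) : ℕ) = n := Nat.mul_div_cancel' hd.1
      have hcast : (d:ℤ) * ((n/d : ℕ):ℤ) = (n:ℤ) := by exact_mod_cast congrArg (Nat.cast : ℕ → ℤ) this
      calc ((n/d : ℕ):ℤ) * (d:ℤ)^2 = ((d:ℤ) * ((n/d : ℕ):ℤ)) * (d:ℤ) := by ring
        _ = (n:ℤ) * (d:ℤ) := by rw [hcast]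
    rw [Finset.sum_congr rfl step, ← Finset.mul_sum, sigma']
    push_cast
    simp [pow_one]
  -- final assembly
  have hspair : (Spair 1 n : ℤ) = ∑ p ∈ Qs n, ((p.1.1:ℤ) * (p.1.2:ℤ)) := by
    rw [spair_eq n]
    push_cast
    rfl
  rw [hspair]
  have final : 12 * ∑ p ∈ Qs n, ((p.1.1:ℤ) * (p.1.2:ℤ))
      = 5 * (sigma' 3 n : ℤ) + (sigma' 1 n : ℤ) - 6 * n * (sigma' 1 n : ℤ) := by
    have c1 : 12 * ∑ p ∈ Qs n, ((p.1.1:ℤ) * (p.1.2:ℤ))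
        = 2 * (6 * ∑ p ∈ Ds n, (p.2.2:ℤ)^2) + (6 * ∑ p ∈ Ds n, ((p.2.1:ℤ) * (p.2.2:ℤ)))
          - 6 * ∑ p ∈ Ds n, (p.1.2:ℤ)^2 := by linarith [key]
    rw [hDy2, hDxy, hDb2] at c1
    have c2 : 2 * (∑ d ∈ n.divisors, ((n/d : ℕ):ℤ) * (((n/d : ℕ):ℤ) - 1) * (2 * ((n/d : ℕ):ℤ) - 1))
          + (∑ d ∈ n.divisors, ((n/d : ℕ):ℤ) * (((n/d : ℕ):ℤ) - 1) * (((n/d : ℕ):ℤ) + 1))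
          - 6 * ∑ d ∈ n.divisors, (((n/d : ℕ):ℤ) - 1) * (d:ℤ)^2
        = ∑ d ∈ n.divisors,
            (2 * (((n/d : ℕ):ℤ) * (((n/d : ℕ):ℤ) - 1) * (2 * ((n/d : ℕ):ℤ) - 1))
              + ((n/d : ℕ):ℤ) * (((n/d : ℕ):ℤ) - 1) * (((n/d : ℕ):ℤ) + 1)
              - 6 * ((((n/d : ℕ):ℤ) - 1) * (d:ℤ)^2)) := by
      rw [Finset.mul_sum, Finset.mul_sum, ← Finset.sum_add_distrib, ← Finset.sum_sub_distrib]
    rw [c2] at c1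
    have hpt : ∀ d ∈ n.divisors,
        (2 * (((n/d : ℕ):ℤ) * (((n/d : ℕ):ℤ) - 1) * (2 * ((n/d : ℕ):ℤ) - 1))
          + ((n/d : ℕ):ℤ) * (((n/d : ℕ):ℤ) - 1) * (((n/d : ℕ):ℤ) + 1)
          - 6 * ((((n/d : ℕ):ℤ) - 1) * (d:ℤ)^2))
        = 5 * ((n/d : ℕ):ℤ)^3 - 6 * ((n/d : ℕ):ℤ)^2 + ((n/d : ℕ):ℤ)
            - 6 * (((n/d : ℕ):ℤ) * (d:ℤ)^2) + 6 * (d:ℤ)^2 := by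
      intro d _
      ring
    rw [Finset.sum_congr rfl hpt] at c1
    have c3 : ∑ d ∈ n.divisors,
          (5 * ((n/d : ℕ):ℤ)^3 - 6 * ((n/d : ℕ):ℤ)^2 + ((n/d : ℕ):ℤ)
            - 6 * (((n/d : ℕ):ℤ) * (d:ℤ)^2) + 6 * (d:ℤ)^2)
        = 5 * (∑ d ∈ n.divisors, ((n/d : ℕ):ℤ)^3) - 6 * (∑ d ∈ n.divisors, ((n/d : ℕ):ℤ)^2)
            + (∑ d ∈ n.divisors, ((n/d : ℕ):ℤ))
            - 6 * (∑ d ∈ n.divisors, ((n/d : ℕ):ℤ) * (d:ℤ)^2)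
            + 6 * (∑ d ∈ n.divisors, (d:ℤ)^2) := by
      rw [Finset.sum_add_distrib, Finset.sum_sub_distrib, Finset.sum_add_distrib,
        Finset.sum_sub_distrib, ← Finset.mul_sum, ← Finset.mul_sum, ← Finset.mul_sum,
        ← Finset.mul_sum]
    rw [c3, hs3, hs2, hs1, hsd] at c1
    linarith [c1]
  exact final

open Finset ArithmeticFunction
open scoped ArithmeticFunction.Moebius ArithmeticFunction.sigma ArithmeticFunction.zeta

theorem besge (n : ℕ) (hn : 1 ≤ n) :
    12 * (Spair 1 n : ℚ) =
      5 * (sigma' 3 n : ℚ) + (sigma' 1 n : ℚ) - 6 * n * (sigma' 1 n : ℚ) := by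
  exact_mod_cast congrArg (fun z : ℤ => (z : ℚ)) (besge_int n hn)


theorem div_ne_zero' {n d : ℕ} (hd : d ∣ n) (hn : n ≠ 0) : n / d ≠ 0 := by
  have hdpos : 0 < d := Nat.pos_of_dvd_of_pos hd (Nat.pos_of_ne_zero hn)
  exact (Nat.div_pos (Nat.le_of_dvd (Nat.pos_of_ne_zero hn) hd) hdpos).ne'

theorem moebius_sigma (k s : ℕ) (hk : k ≠ 0) (hs : s ≠ 0) :
    ∑ d ∈ s.divisors, (μ d : ℚ) * (sigma' k (s / d) : ℚ) = (s : ℚ) ^ k := by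
  have h1 : ((μ : ArithmeticFunction ℚ) * ((σ k : ArithmeticFunction ℕ) : ArithmeticFunction ℚ))
      = ((pow k : ArithmeticFunction ℕ) : ArithmeticFunction ℚ) := by
    rw [← ArithmeticFunction.zeta_mul_pow_eq_sigma, natCoe_mul, ← mul_assoc,
      ArithmeticFunction.coe_moebius_mul_coe_zeta, one_mul]
  have h2 := congrArg (fun f : ArithmeticFunction ℚ => f s) h1
  simp only [mul_apply] at h2
  rw [Nat.sum_divisorsAntidiagonal
    (f := fun a b => ((μ : ArithmeticFunction ℚ)) a * ((σ k : ArithmeticFunction ℕ) : ArithmeticFunction ℚ) b)] at h2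
  have h3 : ∀ d ∈ s.divisors, (μ d : ℚ) * (sigma' k (s / d) : ℚ)
      = ((μ : ArithmeticFunction ℚ)) d * ((σ k : ArithmeticFunction ℕ) : ArithmeticFunction ℚ) (s/d) := by
    intro d hd
    simp [sigma', ArithmeticFunction.sigma_apply, natCoe_apply, intCoe_apply]
  rw [Finset.sum_congr rfl h3, h2]
  simp [ArithmeticFunction.pow_apply, natCoe_apply, hk]

theorem moebius_sum (n : ℕ) (hn : 2 ≤ n) :
    ∑ d ∈ n.divisors, (μ d : ℚ) = 0 := by
  have h1 : ((μ : ArithmeticFunction ℚ) * (ζ : ArithmeticFunction ℚ)) n = (1 : ArithmeticFunction ℚ) n := by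
    rw [ArithmeticFunction.coe_moebius_mul_coe_zeta]
  rw [mul_apply, Nat.sum_divisorsAntidiagonal
    (f := fun a b => ((μ : ArithmeticFunction ℚ)) a * (ζ : ArithmeticFunction ℚ) b)] at h1
  rw [ArithmeticFunction.one_apply_ne (by omega)] at h1
  rw [← h1]
  apply Finset.sum_congr rfl
  intro d hd
  rw [Nat.mem_divisors] at hd
  have h0 : (n / d) ≠ 0 := div_ne_zero' hd.1 (by omega)
  rw [ArithmeticFunction.natCoe_apply, ArithmeticFunction.zeta_apply_ne h0, Nat.cast_one, mul_one,
    ArithmeticFunction.intCoe_apply]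

theorem swap_divisors {M : Type*} [AddCommMonoid M] (n : ℕ) (f : ℕ → ℕ → M) :
    ∑ r ∈ n.divisors, ∑ d ∈ (n / r).divisors, f r d
      = ∑ d ∈ n.divisors, ∑ r ∈ (n / d).divisors, f r d := by
  rw [Finset.sum_sigma' n.divisors (fun r => (n / r).divisors) (fun r d => f r d),
    Finset.sum_sigma' n.divisors (fun d => (n / d).divisors) (fun d r => f r d)]
  refine Finset.sum_nbij' (fun p => ⟨p.2, p.1⟩) (fun p => ⟨p.2, p.1⟩) ?_ ?_ ?_ ?_ ?_
  · rintro ⟨r, d⟩ hp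
    simp only [Finset.mem_sigma, Nat.mem_divisors] at hp ⊢
    obtain ⟨⟨hr, hn0⟩, hd, -⟩ := hp
    have hmul : r * d ∣ n := (Nat.dvd_div_iff_mul_dvd hr).mp hd
    have hd' : d ∣ n := (dvd_mul_left d r).trans hmul
    exact ⟨⟨hd', hn0⟩, (Nat.dvd_div_iff_mul_dvd hd').mpr (by rwa [mul_comm d r]),
      div_ne_zero' hd' hn0⟩
  · rintro ⟨d, r⟩ hp
    simp only [Finset.mem_sigma, Nat.mem_divisors] at hp ⊢
    obtain ⟨⟨hd, hn0⟩, hr, -⟩ := hp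
    have hmul : d * r ∣ n := (Nat.dvd_div_iff_mul_dvd hd).mp hr
    have hr' : r ∣ n := (dvd_mul_left r d).trans hmul
    exact ⟨⟨hr', hn0⟩, (Nat.dvd_div_iff_mul_dvd hr').mpr (by rwa [mul_comm r d]),
      div_ne_zero' hr' hn0⟩
  · rintro ⟨r, d⟩ _; rfl
  · rintro ⟨d, r⟩ _; rfl
  · rintro ⟨r, d⟩ _; rfl

theorem stmt17 (n : ℕ) (hn : 2 ≤ n) :
    ∑ r ∈ n.divisors, (r : ℚ) * (ArithmeticFunction.moebius r : ℚ) * gamma11 n r =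
      ((5 / 24) * (n : ℚ) ^ 3 - (1 / 4) * (n : ℚ) ^ 2) *
        ∑ r ∈ n.divisors, (ArithmeticFunction.moebius r : ℚ) / (r : ℚ) ^ 2 := by
  have hn0 : n ≠ 0 := by omega
  have besge' : ∀ m : ℕ, m ≠ 0 → (Spair 1 m : ℚ)
      = 5/12 * (sigma' 3 m : ℚ) + 1/12 * (sigma' 1 m : ℚ) - 1/2 * m * (sigma' 1 m : ℚ) := by
    intro m hm
    have := besge m (Nat.one_le_iff_ne_zero.mpr hm)
    linarith
  have step1 : ∀ r ∈ n.divisors,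
      (r : ℚ) * (μ r : ℚ) * gamma11 n r
        = 5/24 * ((r:ℚ) * (μ r : ℚ) * ((n/r : ℕ):ℚ)^3) + 1/24 * ((r:ℚ) * (μ r : ℚ) * ((n/r : ℕ):ℚ))
          - 1/4 * ((r:ℚ) * (μ r : ℚ) * ∑ d ∈ (n/r).divisors,
              (μ d : ℚ) * ((n/(r*d) : ℕ):ℚ) * (sigma' 1 (n/(r*d)) : ℚ)) := by
    intro r hr
    rw [Nat.mem_divisors] at hr
    have hs0 : n / r ≠ 0 := div_ne_zero' hr.1 hn0
    have hterm : ∀ d ∈ (n/r).divisors, (μ d : ℚ) * (Spair 1 (n/(r*d)) : ℚ)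
        = 5/12 * ((μ d:ℚ) * (sigma' 3 ((n/r)/d) : ℚ)) + 1/12 * ((μ d:ℚ) * (sigma' 1 ((n/r)/d) : ℚ))
          - 1/2 * ((μ d:ℚ) * (((n/(r*d)) : ℕ):ℚ) * (sigma' 1 (n/(r*d)) : ℚ)) := by
      intro d hd
      rw [Nat.mem_divisors] at hd
      have hdd : n / (r*d) = (n/r)/d := (Nat.div_div_eq_div_mul n r d).symm
      have hm0 : (n/r)/d ≠ 0 := div_ne_zero' hd.1 hs0
      rw [hdd, besge' _ hm0]
      push_cast
      ring
    have hg : gamma11 n r = 5/24 * ((n/r : ℕ):ℚ)^3 + 1/24 * ((n/r : ℕ):ℚ)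
        - 1/4 * ∑ d ∈ (n/r).divisors, (μ d:ℚ) * ((n/(r*d):ℕ):ℚ) * (sigma' 1 (n/(r*d)):ℚ) := by
      rw [gamma11, Finset.sum_congr rfl hterm, Finset.sum_sub_distrib, Finset.sum_add_distrib,
        ← Finset.mul_sum, ← Finset.mul_sum, ← Finset.mul_sum,
        moebius_sigma 3 (n/r) (by norm_num) hs0, moebius_sigma 1 (n/r) (by norm_num) hs0]
      ring
    rw [hg]
    ring
  rw [Finset.sum_congr rfl step1, Finset.sum_sub_distrib, Finset.sum_add_distrib,
    ← Finset.mul_sum, ← Finset.mul_sum, ← Finset.mul_sum]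
  -- second piece vanishes
  have piece2 : ∑ r ∈ n.divisors, (r:ℚ) * (μ r : ℚ) * ((n/r : ℕ):ℚ) = 0 := by
    have hpt : ∀ r ∈ n.divisors, (r:ℚ) * (μ r : ℚ) * ((n/r : ℕ):ℚ) = (n:ℚ) * (μ r : ℚ) := by
      intro r hr
      rw [Nat.mem_divisors] at hr
      have : (r * (n / r) : ℕ) = n := Nat.mul_div_cancel' hr.1
      calc (r:ℚ) * (μ r : ℚ) * ((n/r : ℕ):ℚ) = ((r * (n/r) : ℕ) : ℚ) * (μ r : ℚ) := by
            push_cast; ring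
        _ = (n:ℚ) * (μ r : ℚ) := by rw [this]
    rw [Finset.sum_congr rfl hpt, ← Finset.mul_sum, moebius_sum n hn, mul_zero]
  rw [piece2, mul_zero]
  -- third piece: swap and collapse
  have piece3 : ∑ r ∈ n.divisors, ((r:ℚ) * (μ r : ℚ) * ∑ d ∈ (n/r).divisors,
        (μ d : ℚ) * ((n/(r*d) : ℕ):ℚ) * (sigma' 1 (n/(r*d)) : ℚ))
      = ∑ d ∈ n.divisors, (μ d : ℚ) * ((n/d : ℕ):ℚ)^2 := by
    have expand : ∀ r ∈ n.divisors, ((r:ℚ) * (μ r : ℚ) * ∑ d ∈ (n/r).divisors,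
          (μ d : ℚ) * ((n/(r*d) : ℕ):ℚ) * (sigma' 1 (n/(r*d)) : ℚ))
        = ∑ d ∈ (n/r).divisors,
            (r:ℚ) * (μ r : ℚ) * ((μ d : ℚ) * ((n/(r*d) : ℕ):ℚ) * (sigma' 1 (n/(r*d)) : ℚ)) := by
      intro r _; rw [Finset.mul_sum]
    rw [Finset.sum_congr rfl expand,
      swap_divisors n (fun r d => (r:ℚ) * (μ r : ℚ) * ((μ d : ℚ) * ((n/(r*d) : ℕ):ℚ) * (sigma' 1 (n/(r*d)) : ℚ)))]
    apply Finset.sum_congr rfl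
    intro d hd
    rw [Nat.mem_divisors] at hd
    have ht0 : n / d ≠ 0 := div_ne_zero' hd.1 hn0
    have hpt : ∀ r ∈ (n/d).divisors,
        (r:ℚ) * (μ r : ℚ) * ((μ d : ℚ) * ((n/(r*d) : ℕ):ℚ) * (sigma' 1 (n/(r*d)) : ℚ))
          = ((μ d : ℚ) * ((n/d : ℕ):ℚ)) * ((μ r : ℚ) * (sigma' 1 ((n/d)/r) : ℚ)) := by
      intro r hr
      rw [Nat.mem_divisors] at hr
      have hdd : n / (r*d) = (n/d)/r := by
        rw [mul_comm r d, ← Nat.div_div_eq_div_mul]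
      have hcan : (r * ((n/d) / r) : ℕ) = n/d := Nat.mul_div_cancel' hr.1
      rw [hdd]
      calc (r:ℚ) * (μ r : ℚ) * ((μ d : ℚ) * (((n/d)/r : ℕ):ℚ) * (sigma' 1 ((n/d)/r) : ℚ))
          = ((r * ((n/d)/r) : ℕ) : ℚ) * (μ d : ℚ) * ((μ r : ℚ) * (sigma' 1 ((n/d)/r) : ℚ)) := by
            push_cast; ring
        _ = _ := by rw [hcan]; ring
    rw [Finset.sum_congr rfl hpt, ← Finset.mul_sum, moebius_sigma 1 (n/d) (by norm_num) ht0]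
    ring
  rw [piece3]
  -- final algebra
  have e1 : ∑ r ∈ n.divisors, (r:ℚ) * (μ r : ℚ) * ((n/r : ℕ):ℚ)^3
      = (n:ℚ)^3 * ∑ r ∈ n.divisors, (μ r : ℚ) / (r:ℚ)^2 := by
    rw [Finset.mul_sum]
    apply Finset.sum_congr rfl
    intro r hr
    rw [Nat.mem_divisors] at hr
    have hr0 : (r:ℚ) ≠ 0 := Nat.cast_ne_zero.mpr (fun h => hn0 (by simpa [h] using hr.1))
    rw [Nat.cast_div hr.1 hr0]
    field_simp
  have e2 : ∑ d ∈ n.divisors, (μ d : ℚ) * ((n/d : ℕ):ℚ)^2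
      = (n:ℚ)^2 * ∑ r ∈ n.divisors, (μ r : ℚ) / (r:ℚ)^2 := by
    rw [Finset.mul_sum]
    apply Finset.sum_congr rfl
    intro r hr
    rw [Nat.mem_divisors] at hr
    have hr0 : (r:ℚ) ≠ 0 := Nat.cast_ne_zero.mpr (fun h => hn0 (by simpa [h] using hr.1))
    rw [Nat.cast_div hr.1 hr0]
    field_simp
  rw [e1, e2]
  ring
end
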